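/- Let r = 4d + 1 with d ≥ 1 an integer. For every ε > 0 there exists N such that for all even n ≥ N, f_r(n) ≤ 2 · (1 + ε) · [∑_{i=0}^{d−1} C(n/2, i) · C(n/2, (r−1)/2 − i)] + 2 · f_{2d}(n/2) · f_{2d+1}(n/2), where C(n, k) denotes the binomial coefficient. -/

import Mathlib

/-- A complete `r`-partite `r`-graph (a "block") on a finite vertex set `V ⊆ ℕ`:
it is determined by `r` pairwise disjoint nonempty subsets of `V`. -/
structure Block (V : Finset ℕ) (r : ℕ) where
  parts : Fin r → Finset ℕ
  nonempty : ∀ i, (parts i).Nonempty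
  subset : ∀ i, parts i ⊆ V
  disj : ∀ i j, i ≠ j → Disjoint (parts i) (parts j)

/-- The edge set of a block: all sets contained in the union of the parts
meeting each part in exactly one vertex. -/
def Block.edges {V : Finset ℕ} {r : ℕ} (B : Block V r) : Set (Finset ℕ) :=
  {X | (∀ i, (X ∩ B.parts i).card = 1) ∧ ∀ x ∈ X, ∃ i, x ∈ B.parts i}

/-- `ExactCover V r k F` : there are `k` complete `r`-partite `r`-graphs on `V`
whose edge sets are pairwise disjoint and whose union is the family `F`. -/
def ExactCover (V : Finset ℕ) (r k : ℕ) (F : Set (Finset ℕ)) : Prop :=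
  ∃ B : Fin k → Block V r,
    (∀ i j, i ≠ j → Disjoint (B i).edges (B j).edges) ∧
    (⋃ i, (B i).edges) = F

/-- `f r n` : the minimum number of complete `r`-partite `r`-graphs needed to
partition the edge set of the complete `r`-uniform hypergraph on `[n]`. -/
noncomputable def f (r n : ℕ) : ℕ :=
  sInf {k | ExactCover (Finset.range n) r k
    {X | X ⊆ Finset.range n ∧ X.card = r}}


/-- the elements of `Y` in even position (1-indexed) in increasing order -/
def evens (Y : Finset ℕ) : Finset ℕ := Y.filter fun s => Even ((Y.filter (· ≤ s)).card)

lemma evens_subset (Y : Finset ℕ) : evens Y ⊆ Y := Finset.filter_subset _ _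

lemma mem_evens {Y : Finset ℕ} {s : ℕ} :
    s ∈ evens Y ↔ s ∈ Y ∧ Even ((Y.filter (· ≤ s)).card) := Finset.mem_filter

lemma evens_empty : evens ∅ = ∅ := rfl

lemma filter_le_insert_top {Y : Finset ℕ} {q y : ℕ} (hq : ∀ z ∈ Y, z < q) (hy : y ∈ Y) :
    (insert q Y).filter (· ≤ y) = Y.filter (· ≤ y) := by
  rw [Finset.filter_insert]
  have : ¬ q ≤ y := by have := hq y hy; omega
  simp [this]

lemma filter_le_insert_top_self {Y : Finset ℕ} {q : ℕ} (hq : ∀ z ∈ Y, z < q) :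
    (insert q Y).filter (· ≤ q) = insert q Y := by
  apply Finset.filter_true_of_mem
  intro z hz
  rcases Finset.mem_insert.1 hz with rfl | hz'
  · exact le_rfl
  · exact le_of_lt (hq z hz')

lemma evens_insert_top_odd {Y : Finset ℕ} {q : ℕ} (hq : ∀ z ∈ Y, z < q)
    (hodd : ¬ Even (Y.card + 1)) : evens (insert q Y) = evens Y := by
  have hqY : q ∉ Y := fun h => lt_irrefl q (hq q h)
  ext t
  simp only [mem_evens]
  constructor
  · rintro ⟨ht, he⟩
    rcases Finset.mem_insert.1 ht with rfl | ht'
    · exfalso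
      rw [filter_le_insert_top_self hq, Finset.card_insert_of_notMem hqY] at he
      exact hodd he
    · rw [filter_le_insert_top hq ht'] at he
      exact ⟨ht', he⟩
  · rintro ⟨ht, he⟩
    exact ⟨Finset.mem_insert_of_mem ht, by rw [filter_le_insert_top hq ht]; exact he⟩

lemma evens_insert_top_even {Y : Finset ℕ} {q : ℕ} (hq : ∀ z ∈ Y, z < q)
    (heven : Even (Y.card + 1)) : evens (insert q Y) = insert q (evens Y) := by
  have hqY : q ∉ Y := fun h => lt_irrefl q (hq q h)
  ext t
  constructor
  · intro h
    rcases mem_evens.1 h with ⟨ht, he⟩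
    rcases Finset.mem_insert.1 ht with rfl | ht'
    · exact Finset.mem_insert_self _ _
    · rw [filter_le_insert_top hq ht'] at he
      exact Finset.mem_insert_of_mem (mem_evens.2 ⟨ht', he⟩)
  · intro h
    rcases Finset.mem_insert.1 h with rfl | ht
    · refine mem_evens.2 ⟨Finset.mem_insert_self _ _, ?_⟩
      rw [filter_le_insert_top_self hq, Finset.card_insert_of_notMem hqY]
      exact heven
    · rcases mem_evens.1 ht with ⟨ht', he⟩
      refine mem_evens.2 ⟨Finset.mem_insert_of_mem ht', ?_⟩
      rw [filter_le_insert_top hq ht']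
      exact he

lemma card_evens (Y : Finset ℕ) : (evens Y).card = Y.card / 2 := by
  induction Y using Finset.strongInduction with
  | _ Y ih =>
    rcases Y.eq_empty_or_nonempty with rfl | hY
    · simp [evens_empty]
    · set q := Y.max' hY with hqdef
      have hqmem : q ∈ Y := Y.max'_mem hY
      have hq : ∀ z ∈ Y.erase q, z < q := fun z hz =>
        lt_of_le_of_ne (Finset.le_max' _ _ (Finset.mem_of_mem_erase hz)) (Finset.ne_of_mem_erase hz)
      have hY' : Y = insert q (Y.erase q) := (Finset.insert_erase hqmem).symm
      have hss : Y.erase q ⊂ Y := Finset.erase_ssubset hqmem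
      have hcard : Y.card = (Y.erase q).card + 1 := by
        rw [Finset.card_erase_of_mem hqmem]
        have : 1 ≤ Y.card := Finset.card_pos.2 hY
        omega
      have ihc := ih _ hss
      by_cases hpar : Even ((Y.erase q).card + 1)
      · have hqe : q ∉ evens (Y.erase q) := fun h => (Finset.notMem_erase q Y) (evens_subset _ h)
        rw [hY', evens_insert_top_even hq hpar, Finset.card_insert_of_notMem hqe, ihc,
          Finset.card_insert_of_notMem (Finset.notMem_erase q Y)]
        rcases hpar with ⟨c, hc⟩
        omega
      · rw [hY', evens_insert_top_odd hq hpar, ihc,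
          Finset.card_insert_of_notMem (Finset.notMem_erase q Y)]
        rw [Nat.even_add_one, not_not] at hpar
        rcases hpar with ⟨c, hc⟩
        omega

lemma filter_le_max' {Y : Finset ℕ} (hY : Y.Nonempty) :
    Y.filter (· ≤ Y.max' hY) = Y :=
  Finset.filter_true_of_mem fun z hz => Finset.le_max' _ _ hz

lemma max'_mem_evens {Y : Finset ℕ} (hY : Y.Nonempty) (h : Even Y.card) :
    Y.max' hY ∈ evens Y :=
  mem_evens.2 ⟨Y.max'_mem hY, by rw [filter_le_max']; exact h⟩

lemma max'_not_mem_evens {Y : Finset ℕ} (hY : Y.Nonempty) (h : ¬ Even Y.card) :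
    Y.max' hY ∉ evens Y := by
  intro hmem
  exact h (by simpa [filter_le_max'] using (mem_evens.1 hmem).2)

lemma filter_le_eq_insert_filter_lt {Y : Finset ℕ} {s : ℕ} (hs : s ∈ Y) :
    Y.filter (· ≤ s) = insert s (Y.filter (· < s)) := by
  ext z
  simp only [Finset.mem_filter, Finset.mem_insert]
  constructor
  · rintro ⟨hz, hle⟩
    rcases eq_or_lt_of_le hle with rfl | hlt
    · exact Or.inl rfl
    · exact Or.inr ⟨hz, hlt⟩
  · rintro (rfl | ⟨hz, hlt⟩)
    · exact ⟨hs, le_rfl⟩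
    · exact ⟨hz, le_of_lt hlt⟩

lemma rank_eq_below_succ {Y : Finset ℕ} {s : ℕ} (hs : s ∈ Y) :
    (Y.filter (· ≤ s)).card = (Y.filter (· < s)).card + 1 := by
  rw [filter_le_eq_insert_filter_lt hs, Finset.card_insert_of_notMem]
  simp

lemma below_min_evens {Y : Finset ℕ} {s : ℕ} (hs : s ∈ evens Y)
    (hmin : ∀ t ∈ evens Y, s ≤ t) : (Y.filter (· < s)).card = 1 := by
  have hsY : s ∈ Y := evens_subset Y hs
  have hrank := rank_eq_below_succ hsY
  have hK : Odd ((Y.filter (· < s)).card) := by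
    have he := (mem_evens.1 hs).2
    rw [hrank] at he
    rcases he with ⟨c, hc⟩
    exact ⟨c - 1, by omega⟩
  by_contra hne
  have hK2 : 2 ≤ (Y.filter (· < s)).card := by
    rcases hK with ⟨c, hc⟩
    omega
  set Bs := Y.filter (· < s) with hBs
  have hBne : Bs.Nonempty := Finset.card_pos.1 (by omega)
  set z := Bs.max' hBne with hz
  have hzB : z ∈ Bs := Bs.max'_mem hBne
  set W := Bs.erase z with hW
  have hWcard : W.card = Bs.card - 1 := Finset.card_erase_of_mem hzB
  have hWne : W.Nonempty := Finset.card_pos.1 (by omega)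
  set z' := W.max' hWne with hz'
  have hz'W : z' ∈ W := W.max'_mem hWne
  have hz'B : z' ∈ Bs := Finset.mem_of_mem_erase hz'W
  have hz'z : z' < z :=
    lt_of_le_of_ne (Finset.le_max' _ _ hz'B) (Finset.ne_of_mem_erase hz'W)
  have hkey : Y.filter (· ≤ z') = W := by
    ext y
    constructor
    · intro hy
      rcases Finset.mem_filter.1 hy with ⟨hyY, hyle⟩
      have hyB : y ∈ Bs := Finset.mem_filter.2 ⟨hyY, by
        have : z' < s := (Finset.mem_filter.1 hz'B).2
        omega⟩
      exact Finset.mem_erase.2 ⟨by omega, hyB⟩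
    · intro hy
      have hyB : y ∈ Bs := Finset.mem_of_mem_erase hy
      exact Finset.mem_filter.2 ⟨(Finset.mem_filter.1 hyB).1, Finset.le_max' _ _ hy⟩
  have hz'evens : z' ∈ evens Y := by
    refine mem_evens.2 ⟨(Finset.mem_filter.1 hz'B).1, ?_⟩
    rw [hkey, hWcard]
    rcases hK with ⟨c, hc⟩
    exact ⟨c, by omega⟩
  have : s ≤ z' := hmin z' hz'evens
  have : z' < s := (Finset.mem_filter.1 hz'B).2
  omega

lemma evens_filter_gt {Y : Finset ℕ} {s : ℕ} (h : Even ((Y.filter (· ≤ s)).card)) :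
    evens (Y.filter (s < ·)) = (evens Y).filter (s < ·) := by
  ext t
  simp only [mem_evens, Finset.mem_filter]
  constructor
  · rintro ⟨⟨htY, hst⟩, he⟩
    refine ⟨⟨htY, ?_⟩, hst⟩
    have hsplit : (Y.filter (· ≤ t)).card
        = (Y.filter (· ≤ s)).card + ((Y.filter (s < ·)).filter (· ≤ t)).card := by
      rw [Finset.filter_filter]
      have h1 : (Y.filter (· ≤ s)) = (Y.filter (· ≤ t)).filter (· ≤ s) := by
        rw [Finset.filter_filter]
        apply Finset.filter_congr
        intro x _
        constructor
        · intro hx; exact ⟨by omega, hx⟩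
        · intro hx; exact hx.2
      have h2 : (Y.filter fun x => s < x ∧ x ≤ t) = (Y.filter (· ≤ t)).filter (fun x => ¬ x ≤ s) := by
        rw [Finset.filter_filter]
        apply Finset.filter_congr
        intro x _
        constructor
        · intro hx; exact ⟨hx.2, by omega⟩
        · intro hx; exact ⟨by omega, hx.1⟩
      rw [h1, h2]
      exact (Finset.card_filter_add_card_filter_not _).symm
    rcases h with ⟨a, ha⟩
    rcases he with ⟨b, hb⟩
    rw [hsplit, ha, hb] at *
    exact ⟨a + b, by omega⟩
  · rintro ⟨⟨htY, he⟩, hst⟩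
    refine ⟨⟨htY, hst⟩, ?_⟩
    have hsplit : (Y.filter (· ≤ t)).card
        = (Y.filter (· ≤ s)).card + ((Y.filter (s < ·)).filter (· ≤ t)).card := by
      rw [Finset.filter_filter]
      have h1 : (Y.filter (· ≤ s)) = (Y.filter (· ≤ t)).filter (· ≤ s) := by
        rw [Finset.filter_filter]
        apply Finset.filter_congr
        intro x _
        constructor
        · intro hx; exact ⟨by omega, hx⟩
        · intro hx; exact hx.2
      have h2 : (Y.filter fun x => s < x ∧ x ≤ t) = (Y.filter (· ≤ t)).filter (fun x => ¬ x ≤ s) := by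
        rw [Finset.filter_filter]
        apply Finset.filter_congr
        intro x _
        constructor
        · intro hx; exact ⟨hx.2, by omega⟩
        · intro hx; exact ⟨by omega, hx.1⟩
      rw [h1, h2]
      exact (Finset.card_filter_add_card_filter_not _).symm
    rcases h with ⟨a, ha⟩
    rcases he with ⟨b, hb⟩
    rw [ha, hb] at hsplit
    exact ⟨b - a, by omega⟩

/-- the list of parts on one side, determined by the chain `l`:
interval parts interleaved with singleton parts -/
def gparts (T : Finset ℕ) : ℕ → List ℕ → List (Finset ℕ)
  | _, [] => []
  | p, s :: l => (T.filter fun x => p ≤ x ∧ x < s) :: ({s} : Finset ℕ) :: gparts T (s+1) l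

/-- transversal predicate for a list of parts -/
def Transv (L : List (Finset ℕ)) (Y : Finset ℕ) : Prop :=
  (∀ P ∈ L, (Y ∩ P).card = 1) ∧ ∀ y ∈ Y, ∃ P ∈ L, y ∈ P

lemma gparts_length (T : Finset ℕ) : ∀ (l : List ℕ) (p : ℕ),
    (gparts T p l).length = 2 * l.length := by
  intro l
  induction l with
  | nil => intro p; rfl
  | cons s l ih =>
    intro p
    simp only [gparts, List.length_cons, ih]
    omega

lemma gparts_mem_bounds (T : Finset ℕ) : ∀ (l : List ℕ) (p : ℕ),
    l.Pairwise (· < ·) → (∀ s ∈ l, p ≤ s) →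
    ∀ P ∈ gparts T p l, ∀ x ∈ P, (x ∈ T ∨ x ∈ l) ∧ p ≤ x ∧ ∃ s ∈ l, x ≤ s := by
  intro l
  induction l with
  | nil => intro p _ _ P hP; simp [gparts] at hP
  | cons s l ih =>
    intro p hsort hp P hP x hx
    have htail : ∀ t ∈ l, s < t := (List.pairwise_cons.1 hsort).1
    have hsort' : l.Pairwise (· < ·) := (List.pairwise_cons.1 hsort).2
    simp only [gparts, List.mem_cons] at hP
    rcases hP with rfl | rfl | hP
    · rcases Finset.mem_filter.1 hx with ⟨hxT, hpx, hxs⟩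
      exact ⟨Or.inl hxT, hpx, s, List.mem_cons_self, le_of_lt hxs⟩
    · rcases Finset.mem_singleton.1 hx with rfl
      exact ⟨Or.inr (List.mem_cons_self), hp x (List.mem_cons_self),
        x, List.mem_cons_self, le_rfl⟩
    · obtain ⟨h1, h2, t, ht, hxt⟩ := ih (s+1) hsort'
        (fun t ht => by have := htail t ht; omega) P hP x hx
      refine ⟨?_, ?_, t, List.mem_cons_of_mem _ ht, hxt⟩
      · rcases h1 with h | h
        · exact Or.inl h
        · exact Or.inr (List.mem_cons_of_mem _ h)
      · have := hp s (List.mem_cons_self)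
        omega

lemma evens_insert_bottom₂ {Y' : Finset ℕ} {y0 s : ℕ} (h1 : y0 < s) (h2 : ∀ y ∈ Y', s < y) :
    evens (insert y0 (insert s Y')) = insert s (evens Y') := by
  set Z := insert y0 (insert s Y') with hZ
  have hy0Z : y0 ∈ Z := Finset.mem_insert_self _ _
  have hsZ : s ∈ Z := Finset.mem_insert_of_mem (Finset.mem_insert_self _ _)
  have hy0s : y0 ∉ insert s Y' := by
    intro h
    rcases Finset.mem_insert.1 h with rfl | h
    · omega
    · have := h2 _ h; omega
  have hsY' : s ∉ Y' := fun h => by have := h2 _ h; omega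
  have hmemZ : ∀ z, z ∈ Z ↔ z = y0 ∨ z = s ∨ z ∈ Y' := by
    intro z
    simp [hZ, Finset.mem_insert]
  have hf0 : Z.filter (· ≤ y0) = {y0} := by
    ext z
    simp only [Finset.mem_filter, Finset.mem_singleton, hmemZ]
    constructor
    · rintro ⟨(rfl | rfl | hz), hle⟩
      · rfl
      · omega
      · have := h2 _ hz; omega
    · rintro rfl; exact ⟨Or.inl rfl, le_rfl⟩
  have hfs : Z.filter (· ≤ s) = {y0, s} := by
    ext z
    simp only [Finset.mem_filter, Finset.mem_insert, Finset.mem_singleton, hmemZ]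
    constructor
    · rintro ⟨(rfl | rfl | hz), hle⟩
      · exact Or.inl rfl
      · exact Or.inr rfl
      · have := h2 _ hz; omega
    · rintro (rfl | rfl)
      · exact ⟨Or.inl rfl, by omega⟩
      · exact ⟨Or.inr (Or.inl rfl), le_rfl⟩
  have hft : ∀ t ∈ Y', Z.filter (· ≤ t) = insert y0 (insert s (Y'.filter (· ≤ t))) := by
    intro t ht
    ext z
    simp only [Finset.mem_filter, Finset.mem_insert, hmemZ]
    constructor
    · rintro ⟨(rfl | rfl | hz), hle⟩
      · exact Or.inl rfl
      · exact Or.inr (Or.inl rfl)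
      · exact Or.inr (Or.inr ⟨hz, hle⟩)
    · rintro (rfl | rfl | ⟨hz, hle⟩)
      · have := h2 _ ht; omega
      · exact ⟨Or.inr (Or.inl rfl), le_of_lt (h2 _ ht)⟩
      · exact ⟨Or.inr (Or.inr hz), hle⟩
  ext t
  constructor
  · intro hmem
    obtain ⟨htZ, he⟩ := mem_evens.1 hmem
    rcases (hmemZ t).1 htZ with rfl | rfl | ht
    · exfalso
      rw [hf0, Finset.card_singleton] at he
      simp at he
    · exact Finset.mem_insert_self _ _
    · refine Finset.mem_insert_of_mem (mem_evens.2 ⟨ht, ?_⟩)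
      rw [hft t ht] at he
      rw [Finset.card_insert_of_notMem, Finset.card_insert_of_notMem] at he
      · rcases he with ⟨c, hc⟩
        exact ⟨c - 1, by omega⟩
      · intro h; exact hsY' (Finset.filter_subset _ _ h)
      · intro h
        rcases Finset.mem_insert.1 h with rfl | h
        · omega
        · have := h2 _ (Finset.filter_subset _ _ h); omega
  · intro hmem
    rcases Finset.mem_insert.1 hmem with rfl | ht
    · refine mem_evens.2 ⟨hsZ, ?_⟩
      rw [hfs]
      rw [Finset.card_insert_of_notMem (by simp; omega), Finset.card_singleton]
      exact ⟨1, rfl⟩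
    · rcases mem_evens.1 ht with ⟨htY, he⟩
      refine mem_evens.2 ⟨(hmemZ t).2 (Or.inr (Or.inr htY)), ?_⟩
      rw [hft t htY]
      rw [Finset.card_insert_of_notMem, Finset.card_insert_of_notMem]
      · rcases he with ⟨c, hc⟩
        exact ⟨c + 1, by omega⟩
      · intro h; exact hsY' (Finset.filter_subset _ _ h)
      · intro h
        rcases Finset.mem_insert.1 h with rfl | h
        · omega
        · have := h2 _ (Finset.filter_subset _ _ h); omega

lemma filter_not_le_eq (Y : Finset ℕ) (s : ℕ) :
    Y.filter (fun x => ¬ x ≤ s) = Y.filter (fun x => s < x) := by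
  apply Finset.filter_congr
  intro x _
  constructor
  · intro h; omega
  · intro h; omega

lemma card_split_at (Y : Finset ℕ) {s : ℕ} (hs : s ∈ Y) :
    Y.card = (Y.filter (· < s)).card + 1 + (Y.filter (fun x => s < x)).card := by
  have h := Finset.card_filter_add_card_filter_not (s := Y) (p := (· ≤ s))
  rw [filter_not_le_eq] at h
  rw [← h, rank_eq_below_succ hs]

lemma side_iff (T : Finset ℕ) : ∀ (l : List ℕ) (p : ℕ) (Y : Finset ℕ),
    l.Pairwise (· < ·) → (∀ s ∈ l, p ≤ s) → (∀ s ∈ l, s ∈ T) →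
    (Transv (gparts T p l) Y ↔
      Y ⊆ T ∧ (∀ y ∈ Y, p ≤ y) ∧ Y.card = 2 * l.length ∧ evens Y = l.toFinset) := by
  intro l
  induction l with
  | nil =>
    intro p Y _ _ _
    constructor
    · rintro ⟨_, hcov⟩
      have hY : Y = ∅ := by
        apply Finset.eq_empty_iff_forall_notMem.2
        intro y hy
        obtain ⟨P, hP, _⟩ := hcov y hy
        simp [gparts] at hP
      subst hY
      simp [evens_empty]
    · rintro ⟨_, _, hcard, _⟩
      have hY : Y = ∅ := Finset.card_eq_zero.1 (by simpa using hcard)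
      subst hY
      constructor
      · intro P hP; simp [gparts] at hP
      · intro y hy; simp at hy
  | cons s l ih =>
    intro p Y hsort hp hT
    have htail : ∀ t ∈ l, s < t := (List.pairwise_cons.1 hsort).1
    have hsort' : l.Pairwise (· < ·) := (List.pairwise_cons.1 hsort).2
    have hp' : ∀ t ∈ l, s + 1 ≤ t := fun t ht => htail t ht
    have hT' : ∀ t ∈ l, t ∈ T := fun t ht => hT t (List.mem_cons_of_mem _ ht)
    have hpsed : p ≤ s := hp s (List.mem_cons_self)
    have hsT : s ∈ T := hT s (List.mem_cons_self)
    have hmem_tail : ∀ P ∈ gparts T (s+1) l, ∀ x ∈ P, s + 1 ≤ x := by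
      intro P hP x hx
      exact (gparts_mem_bounds T l (s+1) hsort' hp' P hP x hx).2.1
    set I := T.filter (fun x => p ≤ x ∧ x < s) with hI
    have hglist : gparts T p (s :: l) = I :: ({s} : Finset ℕ) :: gparts T (s+1) l := rfl
    constructor
    · rintro ⟨hcards, hcov⟩
      have hIcard : (Y ∩ I).card = 1 := hcards I (by rw [hglist]; exact List.mem_cons_self)
      have hscard : (Y ∩ {s}).card = 1 :=
        hcards {s} (by rw [hglist]; exact List.mem_cons_of_mem _ (List.mem_cons_self))
      obtain ⟨y0, hy0⟩ := Finset.card_eq_one.1 hIcard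
      have hy0Y : y0 ∈ Y := (Finset.mem_inter.1 (hy0 ▸ Finset.mem_singleton_self y0)).1
      have hy0I : y0 ∈ I := (Finset.mem_inter.1 (hy0 ▸ Finset.mem_singleton_self y0)).2
      obtain ⟨hy0T, hpy0, hy0s⟩ := Finset.mem_filter.1 hy0I
      have hsY : s ∈ Y := by
        obtain ⟨z, hz⟩ := Finset.card_eq_one.1 hscard
        have hzz : z ∈ Y ∩ {s} := hz ▸ Finset.mem_singleton_self z
        rcases Finset.mem_inter.1 hzz with ⟨hzY, hzs⟩
        rcases Finset.mem_singleton.1 hzs with rfl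
        exact hzY
      set Y' := Y.filter (fun x => s < x) with hY'
      have hY'sub : Y' ⊆ Y := Finset.filter_subset _ _
      have htr' : Transv (gparts T (s+1) l) Y' := by
        constructor
        · intro P hP
          have : Y' ∩ P = Y ∩ P := by
            ext x
            simp only [Finset.mem_inter, hY', Finset.mem_filter]
            constructor
            · rintro ⟨⟨hxY, _⟩, hxP⟩; exact ⟨hxY, hxP⟩
            · rintro ⟨hxY, hxP⟩
              exact ⟨⟨hxY, by have := hmem_tail P hP x hxP; omega⟩, hxP⟩
          rw [this]
          exact hcards P (by rw [hglist]; exact List.mem_cons_of_mem _ (List.mem_cons_of_mem _ hP))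
        · intro y hy
          rcases Finset.mem_filter.1 hy with ⟨hyY, hsy⟩
          obtain ⟨P, hP, hyP⟩ := hcov y hyY
          rw [hglist] at hP
          rcases List.mem_cons.1 hP with rfl | hP2
          · exfalso
            have := (Finset.mem_filter.1 hyP).2
            omega
          · rcases List.mem_cons.1 hP2 with rfl | hP3
            · exfalso
              have := Finset.mem_singleton.1 hyP
              omega
            · exact ⟨P, hP3, hyP⟩
      obtain ⟨hY'T, hY'p, hY'card, hY'evens⟩ := (ih (s+1) Y' hsort' hp' hT').1 htr'
      have hYdecomp : Y = insert y0 (insert s Y') := by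
        ext y
        constructor
        · intro hy
          obtain ⟨P, hP, hyP⟩ := hcov y hy
          rw [hglist] at hP
          rcases List.mem_cons.1 hP with rfl | hP2
          · have : y ∈ Y ∩ I := Finset.mem_inter.2 ⟨hy, hyP⟩
            rw [hy0] at this
            rcases Finset.mem_singleton.1 this with rfl
            exact Finset.mem_insert_self _ _
          · rcases List.mem_cons.1 hP2 with rfl | hP3
            · rcases Finset.mem_singleton.1 hyP with rfl
              exact Finset.mem_insert_of_mem (Finset.mem_insert_self _ _)
            · have := hmem_tail _ hP3 y hyP
              refine Finset.mem_insert_of_mem (Finset.mem_insert_of_mem ?_)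
              exact Finset.mem_filter.2 ⟨hy, by omega⟩
        · intro hy
          rcases Finset.mem_insert.1 hy with rfl | hy2
          · exact hy0Y
          · rcases Finset.mem_insert.1 hy2 with rfl | hy3
            · exact hsY
            · exact hY'sub hy3
      have hy0n : y0 ∉ insert s Y' := by
        intro h
        rcases Finset.mem_insert.1 h with rfl | h2
        · omega
        · have := (Finset.mem_filter.1 h2).2; omega
      have hsn : s ∉ Y' := fun h => by have := (Finset.mem_filter.1 h).2; omega
      refine ⟨?_, ?_, ?_, ?_⟩
      · rw [hYdecomp]
        intro y hy
        rcases Finset.mem_insert.1 hy with rfl | hy2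
        · exact hy0T
        · rcases Finset.mem_insert.1 hy2 with rfl | hy3
          · exact hsT
          · exact hY'T hy3
      · rw [hYdecomp]
        intro y hy
        rcases Finset.mem_insert.1 hy with rfl | hy2
        · exact hpy0
        · rcases Finset.mem_insert.1 hy2 with rfl | hy3
          · exact hpsed
          · have := hY'p y hy3; omega
      · rw [hYdecomp, Finset.card_insert_of_notMem hy0n, Finset.card_insert_of_notMem hsn,
          hY'card]
        simp [List.length_cons]
        ring
      · rw [hYdecomp, evens_insert_bottom₂ hy0s (fun y hy => (Finset.mem_filter.1 hy).2),
          hY'evens, List.toFinset_cons]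
    · rintro ⟨hYT, hpY, hcard, hevens⟩
      have hsev : s ∈ evens Y := by
        rw [hevens, List.toFinset_cons]
        exact Finset.mem_insert_self _ _
      have hsY : s ∈ Y := evens_subset _ hsev
      have hsmin : ∀ t ∈ evens Y, s ≤ t := by
        intro t ht
        rw [hevens, List.toFinset_cons] at ht
        rcases Finset.mem_insert.1 ht with rfl | ht2
        · exact le_rfl
        · exact le_of_lt (htail t (List.mem_toFinset.1 ht2))
      have hbelow : (Y.filter (· < s)).card = 1 := below_min_evens hsev hsmin
      obtain ⟨y0, hy0⟩ := Finset.card_eq_one.1 hbelow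
      have hy0mem : y0 ∈ Y.filter (· < s) := hy0 ▸ Finset.mem_singleton_self y0
      have hy0Y : y0 ∈ Y := (Finset.mem_filter.1 hy0mem).1
      have hy0s : y0 < s := (Finset.mem_filter.1 hy0mem).2
      set Y' := Y.filter (fun x => s < x) with hY'
      have hY'evens : evens Y' = l.toFinset := by
        have heven_rank : Even ((Y.filter (· ≤ s)).card) := (mem_evens.1 hsev).2
        rw [hY', evens_filter_gt heven_rank, hevens, List.toFinset_cons]
        ext t
        simp only [Finset.mem_filter, Finset.mem_insert, List.mem_toFinset]
        constructor
        · rintro ⟨(rfl | ht), hst⟩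
          · omega
          · exact ht
        · intro ht
          exact ⟨Or.inr ht, htail t ht⟩
      have hY'card : Y'.card = 2 * l.length := by
        have hcs := card_split_at Y hsY
        rw [hbelow, ← hY', hcard] at hcs
        simp only [List.length_cons] at hcs
        omega
      have htr' : Transv (gparts T (s+1) l) Y' :=
        (ih (s+1) Y' hsort' hp' hT').2
          ⟨fun y hy => hYT (Finset.filter_subset _ _ hy),
           fun y hy => by have := (Finset.mem_filter.1 hy).2; omega,
           hY'card, hY'evens⟩
      constructor
      · intro P hP
        rw [hglist] at hP
        rcases List.mem_cons.1 hP with rfl | hP2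
        · have : Y ∩ I = {y0} := by
            ext x
            simp only [Finset.mem_inter, Finset.mem_singleton, hI, Finset.mem_filter]
            constructor
            · rintro ⟨hxY, _, _, hxs⟩
              have : x ∈ Y.filter (· < s) := Finset.mem_filter.2 ⟨hxY, hxs⟩
              rw [hy0] at this
              exact Finset.mem_singleton.1 this
            · rintro rfl
              exact ⟨hy0Y, hYT hy0Y, hpY _ hy0Y, hy0s⟩
          rw [this, Finset.card_singleton]
        · rcases List.mem_cons.1 hP2 with rfl | hP3
          · have : Y ∩ {s} = {s} := by
              apply Finset.inter_singleton_of_mem hsY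
            rw [this, Finset.card_singleton]
          · have : Y ∩ P = Y' ∩ P := by
              ext x
              simp only [Finset.mem_inter, hY', Finset.mem_filter]
              constructor
              · rintro ⟨hxY, hxP⟩
                exact ⟨⟨hxY, by have := hmem_tail P hP3 x hxP; omega⟩, hxP⟩
              · rintro ⟨⟨hxY, _⟩, hxP⟩
                exact ⟨hxY, hxP⟩
            rw [this]
            exact htr'.1 P hP3
      · intro y hy
        rcases lt_trichotomy y s with hlt | heq | hgt
        · have : y ∈ Y.filter (· < s) := Finset.mem_filter.2 ⟨hy, hlt⟩
          rw [hy0] at this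
          rcases Finset.mem_singleton.1 this with rfl
          refine ⟨I, by rw [hglist]; exact List.mem_cons_self, ?_⟩
          exact Finset.mem_filter.2 ⟨hYT hy, hpY _ hy, hlt⟩
        · exact ⟨({s} : Finset ℕ), by rw [hglist]; exact List.mem_cons_of_mem _ (List.mem_cons_self),
            Finset.mem_singleton.2 heq⟩
        · have hyY' : y ∈ Y' := Finset.mem_filter.2 ⟨hy, hgt⟩
          obtain ⟨P, hP, hyP⟩ := htr'.2 y hyY'
          exact ⟨P, by rw [hglist]; exact List.mem_cons_of_mem _ (List.mem_cons_of_mem _ hP), hyP⟩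
def Block.ofList (V : Finset ℕ) (r : ℕ) (L : List (Finset ℕ)) (hlen : L.length = r)
    (h1 : ∀ P ∈ L, P.Nonempty) (h2 : ∀ P ∈ L, P ⊆ V) (h3 : L.Pairwise Disjoint) :
    Block V r where
  parts i := L.get ⟨i.1, by omega⟩
  nonempty i := h1 _ (L.get_mem _)
  subset i := h2 _ (L.get_mem _)
  disj i j hij := by
    have hne : i.1 ≠ j.1 := fun h => hij (Fin.ext h)
    have hpw := List.pairwise_iff_get.1 h3
    rcases lt_or_gt_of_ne hne with h | h
    · exact hpw ⟨i.1, by omega⟩ ⟨j.1, by omega⟩ h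
    · exact (hpw ⟨j.1, by omega⟩ ⟨i.1, by omega⟩ h).symm

lemma Block.ofList_edges {V : Finset ℕ} {r : ℕ} {L : List (Finset ℕ)} {hlen h1 h2 h3}
    (X : Finset ℕ) :
    X ∈ (Block.ofList V r L hlen h1 h2 h3).edges ↔ Transv L X := by
  constructor
  · rintro ⟨hc, hcov⟩
    constructor
    · intro P hP
      obtain ⟨i, hi⟩ := List.mem_iff_get.1 hP
      have h := hc ⟨i.1, by omega⟩
      rw [← hi]
      simpa [Block.ofList] using h
    · intro x hx
      obtain ⟨i, hi⟩ := hcov x hx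
      exact ⟨L.get ⟨i.1, by omega⟩, L.get_mem _, hi⟩
  · rintro ⟨hc, hcov⟩
    constructor
    · intro i
      exact hc _ (L.get_mem _)
    · intro x hx
      obtain ⟨P, hP, hxP⟩ := hcov x hx
      obtain ⟨i, hi⟩ := List.mem_iff_get.1 hP
      refine ⟨⟨i.1, by omega⟩, ?_⟩
      have hh : (Block.ofList V r L hlen h1 h2 h3).parts ⟨i.1, by omega⟩ = L.get i := by
        simp [Block.ofList]
      rw [hh, hi]
      exact hxP

lemma Block.card_of_mem_edges {V : Finset ℕ} {r : ℕ} (B : Block V r) {X : Finset ℕ}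
    (hX : X ∈ B.edges) : X.card = r := by
  classical
  rcases hX with ⟨hc, hcov⟩
  have hX' : X = Finset.univ.biUnion (fun i : Fin r => X ∩ B.parts i) := by
    ext x
    simp only [Finset.mem_biUnion, Finset.mem_univ, true_and, Finset.mem_inter]
    constructor
    · intro hx
      obtain ⟨i, hi⟩ := hcov x hx
      exact ⟨i, hx, hi⟩
    · rintro ⟨i, hx, _⟩
      exact hx
  rw [hX', Finset.card_biUnion]
  · simp [hc]
  · intro i _ j _ hij
    exact Finset.disjoint_left.2 fun a ha ha' =>
      (Finset.disjoint_left.1 (B.disj i j hij)) (Finset.mem_inter.1 ha).2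
        (Finset.mem_inter.1 ha').2

lemma Block.subset_of_mem_edges {V : Finset ℕ} {r : ℕ} (B : Block V r) {X : Finset ℕ}
    (hX : X ∈ B.edges) : X ⊆ V := by
  intro x hx
  obtain ⟨i, hi⟩ := hX.2 x hx
  exact B.subset i hi

lemma exactCover_of_finset {α : Type} [DecidableEq α] (V : Finset ℕ) (r : ℕ)
    (F : Set (Finset ℕ)) (D : Finset α) (blk : (x : α) → x ∈ D → Block V r)
    (hdisj : ∀ x hx y hy, x ≠ y → Disjoint (blk x hx).edges (blk y hy).edges)
    (hsub : ∀ x hx, (blk x hx).edges ⊆ F)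
    (hcov : ∀ e, e ∈ F → ∃ x hx, e ∈ (blk x hx).edges) :
    ExactCover V r D.card F := by
  classical
  refine ⟨fun i => blk (D.equivFin.symm i).1 (D.equivFin.symm i).2, ?_, ?_⟩
  · intro i j hij
    apply hdisj
    intro h
    apply hij
    have : (D.equivFin.symm i) = (D.equivFin.symm j) := Subtype.ext h
    simpa using congrArg D.equivFin this
  · ext e
    simp only [Set.mem_iUnion]
    constructor
    · rintro ⟨i, hi⟩
      exact hsub _ _ hi
    · intro he
      obtain ⟨x, hx, hxe⟩ := hcov e he
      refine ⟨D.equivFin ⟨x, hx⟩, ?_⟩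
      simpa using hxe

/-- block whose parts are the singletons of a given `r`-set -/
def singletonBlock (V : Finset ℕ) (r : ℕ) (e : Finset ℕ) (he : e.card = r) (heV : e ⊆ V) :
    Block V r :=
  Block.ofList V r ((e.sort (· ≤ ·)).map (fun x => ({x} : Finset ℕ)))
    (by rw [List.length_map, Finset.length_sort]; exact he)
    (by intro P hP
        obtain ⟨x, _, rfl⟩ := List.mem_map.1 hP
        exact Finset.singleton_nonempty x)
    (by intro P hP
        obtain ⟨x, hx, rfl⟩ := List.mem_map.1 hP
        simpa using heV ((Finset.mem_sort _).1 hx))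
    (by apply List.Pairwise.map (R := (· ≠ ·)) (fun x => ({x} : Finset ℕ))
          (fun a b hab => Finset.disjoint_singleton.2 hab)
        exact (e.sort_nodup (· ≤ ·)))

lemma singletonBlock_edges {V : Finset ℕ} {r : ℕ} {e : Finset ℕ} (he : e.card = r)
    (heV : e ⊆ V) : (singletonBlock V r e he heV).edges = {e} := by
  ext X
  rw [Set.mem_singleton_iff]
  rw [show (X ∈ (singletonBlock V r e he heV).edges) ↔ _ from Block.ofList_edges X]
  constructor
  · rintro ⟨hc, hcov⟩
    apply Finset.Subset.antisymm
    · intro x hx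
      obtain ⟨P, hP, hxP⟩ := hcov x hx
      obtain ⟨y, hy, rfl⟩ := List.mem_map.1 hP
      rcases Finset.mem_singleton.1 hxP with rfl
      exact (Finset.mem_sort _).1 hy
    · intro x hx
      have hx' : ({x} : Finset ℕ) ∈ (e.sort (· ≤ ·)).map (fun x => ({x} : Finset ℕ)) :=
        List.mem_map.2 ⟨x, (Finset.mem_sort _).2 hx, rfl⟩
      have := hc _ hx'
      obtain ⟨z, hz⟩ := Finset.card_eq_one.1 this
      have hzz : z ∈ X ∩ {x} := hz ▸ Finset.mem_singleton_self z
      rcases Finset.mem_inter.1 hzz with ⟨hzX, hzx⟩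
      rcases Finset.mem_singleton.1 hzx with rfl
      exact hzX
  · rintro rfl
    constructor
    · intro P hP
      obtain ⟨y, hy, rfl⟩ := List.mem_map.1 hP
      rw [Finset.inter_singleton_of_mem ((Finset.mem_sort _).1 hy)]
      exact Finset.card_singleton y
    · intro x hx
      exact ⟨{x}, List.mem_map.2 ⟨x, (Finset.mem_sort _).2 hx, rfl⟩, Finset.mem_singleton_self x⟩

lemma coverSet_nonempty (n r : ℕ) :
    {k | ExactCover (Finset.range n) r k
      {X | X ⊆ Finset.range n ∧ X.card = r}}.Nonempty := by
  classical
  refine ⟨((Finset.range n).powersetCard r).card, ?_⟩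
  refine exactCover_of_finset _ _ _ _
    (fun e he => singletonBlock (Finset.range n) r e
      (Finset.mem_powersetCard.1 he).2 (Finset.mem_powersetCard.1 he).1) ?_ ?_ ?_
  · intro x hx y hy hxy
    rw [singletonBlock_edges, singletonBlock_edges]
    simpa using hxy
  · intro x hx
    rw [singletonBlock_edges]
    rintro X rfl
    exact ⟨(Finset.mem_powersetCard.1 hx).1, (Finset.mem_powersetCard.1 hx).2⟩
  · intro e he
    refine ⟨e, Finset.mem_powersetCard.2 ⟨he.1, he.2⟩, ?_⟩
    rw [singletonBlock_edges]
    rfl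

lemma exists_cover_f (r n : ℕ) :
    ExactCover (Finset.range n) r (f r n)
      {X | X ⊆ Finset.range n ∧ X.card = r} :=
  Nat.sInf_mem (coverSet_nonempty n r)

lemma f_le_of_exactCover {r n k : ℕ}
    (h : ExactCover (Finset.range n) r k {X | X ⊆ Finset.range n ∧ X.card = r}) :
    f r n ≤ k :=
  Nat.sInf_le h

def Ov (T S : Finset ℕ) : Finset ℕ := T.filter (fun x => ∀ s ∈ S, s < x)

lemma mem_Ov {T S : Finset ℕ} {x : ℕ} : x ∈ Ov T S ↔ x ∈ T ∧ ∀ s ∈ S, s < x :=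
  Finset.mem_filter

lemma gparts_subset (T : Finset ℕ) (l : List ℕ) (p : ℕ) (hsort : l.Pairwise (· < ·))
    (hp : ∀ s ∈ l, p ≤ s) (hT : ∀ s ∈ l, s ∈ T) :
    ∀ P ∈ gparts T p l, P ⊆ T := by
  intro P hP x hx
  rcases (gparts_mem_bounds T l p hsort hp P hP x hx).1 with h | h
  · exact h
  · exact hT _ h

lemma elems_le_of_evens {Y S : Finset ℕ} (hev : evens Y = S) (hcard : Y.card = 2 * S.card) :
    ∀ y ∈ Y, ∃ s ∈ S, y ≤ s := by
  intro y hy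
  have hne : Y.Nonempty := ⟨y, hy⟩
  have heven : Even Y.card := ⟨S.card, by omega⟩
  have hmax : Y.max' hne ∈ S := hev ▸ max'_mem_evens hne heven
  exact ⟨Y.max' hne, hmax, Finset.le_max' _ _ hy⟩

lemma split_odd {S W : Finset ℕ} (hev : evens W = S) (hcard : W.card = 2 * S.card + 1) :
    ∃ q ∈ W, (∀ s ∈ S, s < q) ∧ (W.erase q).card = 2 * S.card ∧ evens (W.erase q) = S ∧
      (∀ w ∈ W.erase q, ∃ s ∈ S, w ≤ s) := by
  have hne : W.Nonempty := Finset.card_pos.1 (by omega)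
  set q := W.max' hne with hq
  have hqW : q ∈ W := W.max'_mem hne
  have hodd : ¬ Even W.card := by rw [hcard]; simp [Nat.even_add_one, parity_simps]
  have hqS : q ∉ S := hev ▸ max'_not_mem_evens hne hodd
  have hSq : ∀ s ∈ S, s < q := by
    intro s hs
    have hsW : s ∈ W := evens_subset W (by rw [hev]; exact hs)
    exact lt_of_le_of_ne (Finset.le_max' _ _ hsW) (fun h => hqS (h ▸ hs))
  have hlt : ∀ z ∈ W.erase q, z < q := fun z hz =>
    lt_of_le_of_ne (Finset.le_max' _ _ (Finset.mem_of_mem_erase hz)) (Finset.ne_of_mem_erase hz)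
  have hWi : W = insert q (W.erase q) := (Finset.insert_erase hqW).symm
  have hcard' : (W.erase q).card = 2 * S.card := by
    rw [Finset.card_erase_of_mem hqW]; omega
  have hparodd : ¬ Even ((W.erase q).card + 1) := by
    rw [hcard']; simp [Nat.even_add_one, parity_simps]
  have hev' : evens (W.erase q) = S := by
    have := evens_insert_top_odd hlt hparodd
    rw [← hWi] at this
    rw [← hev, ← this]
  exact ⟨q, hqW, hSq, hcard', hev', elems_le_of_evens hev' hcard'⟩

lemma join_odd {S Y : Finset ℕ} {q : ℕ} (hev : evens Y = S) (hcard : Y.card = 2 * S.card)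
    (hq : ∀ s ∈ S, s < q) :
    q ∉ Y ∧ evens (insert q Y) = S ∧ (insert q Y).card = 2 * S.card + 1 := by
  have hlt : ∀ y ∈ Y, y < q := by
    intro y hy
    obtain ⟨s, hs, hys⟩ := elems_le_of_evens hev hcard y hy
    have := hq s hs
    omega
  have hqY : q ∉ Y := fun h => lt_irrefl q (hlt q h)
  have hparodd : ¬ Even (Y.card + 1) := by
    rw [hcard]; simp [Nat.even_add_one, parity_simps]
  exact ⟨hqY, by rw [evens_insert_top_odd hlt hparodd, hev],
    by rw [Finset.card_insert_of_notMem hqY, hcard]⟩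

lemma side_iff' (T : Finset ℕ) (S : Finset ℕ) (hST : S ⊆ T) (Y : Finset ℕ) :
    Transv (gparts T 0 (S.sort (· ≤ ·))) Y ↔
      (Y ⊆ T ∧ Y.card = 2 * S.card ∧ evens Y = S) := by
  have hsort : (S.sort (· ≤ ·)).Pairwise (· < ·) := (Finset.sortedLT_sort S).pairwise
  have h := side_iff T (S.sort (· ≤ ·)) 0 Y hsort (fun s _ => Nat.zero_le s)
    (fun s hs => hST ((Finset.mem_sort _).1 hs))
  rw [h, Finset.length_sort, Finset.sort_toFinset]
  constructor
  · rintro ⟨h1, _, h3, h4⟩; exact ⟨h1, h3, h4⟩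
  · rintro ⟨h1, h3, h4⟩; exact ⟨h1, fun y _ => Nat.zero_le y, h3, h4⟩

section Gadget

variable (m : ℕ)

def Aset : Finset ℕ := Finset.range m
def Bset : Finset ℕ := Finset.Ico m (2*m)
def eA (X : Finset ℕ) : Finset ℕ := X.filter (· < m)
def eB (X : Finset ℕ) : Finset ℕ := X.filter (fun x => m ≤ x)

lemma eA_union_eB (X : Finset ℕ) : eA m X ∪ eB m X = X := by
  ext x
  simp only [Finset.mem_union, eA, eB, Finset.mem_filter]
  constructor
  · rintro (⟨h, _⟩ | ⟨h, _⟩) <;> exact h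
  · intro h
    rcases lt_or_ge x m with hh | hh
    · exact Or.inl ⟨h, hh⟩
    · exact Or.inr ⟨h, hh⟩

lemma card_eA_add_eB (X : Finset ℕ) : (eA m X).card + (eB m X).card = X.card := by
  have h := Finset.card_filter_add_card_filter_not (s := X) (p := (· < m))
  rw [show X.filter (fun x => ¬ x < m) = eB m X from Finset.filter_congr
    (fun x _ => by constructor <;> (intro h; omega))] at h
  exact h

lemma eA_subset (X : Finset ℕ) (h : X ⊆ Finset.range (2*m)) : eA m X ⊆ Aset m := by
  intro x hx
  rcases Finset.mem_filter.1 hx with ⟨_, h2⟩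
  exact Finset.mem_range.2 h2

lemma eB_subset (X : Finset ℕ) (h : X ⊆ Finset.range (2*m)) : eB m X ⊆ Bset m := by
  intro x hx
  rcases Finset.mem_filter.1 hx with ⟨h1, h2⟩
  exact Finset.mem_Ico.2 ⟨h2, Finset.mem_range.1 (h h1)⟩

lemma inter_eA {X P : Finset ℕ} (hP : P ⊆ Aset m) : X ∩ P = eA m X ∩ P := by
  ext x
  simp only [Finset.mem_inter, eA, Finset.mem_filter]
  constructor
  · rintro ⟨h1, h2⟩
    exact ⟨⟨h1, Finset.mem_range.1 (hP h2)⟩, h2⟩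
  · rintro ⟨⟨h1, _⟩, h2⟩
    exact ⟨h1, h2⟩

lemma inter_eB {X P : Finset ℕ} (hP : P ⊆ Bset m) : X ∩ P = eB m X ∩ P := by
  ext x
  simp only [Finset.mem_inter, eB, Finset.mem_filter]
  constructor
  · rintro ⟨h1, h2⟩
    exact ⟨⟨h1, (Finset.mem_Ico.1 (hP h2)).1⟩, h2⟩
  · rintro ⟨⟨h1, _⟩, h2⟩
    exact ⟨h1, h2⟩

/-- the parts of a gadget block -/
def gadList (S S' : Finset ℕ) : List (Finset ℕ) :=
  gparts (Aset m) 0 (S.sort (· ≤ ·)) ++ gparts (Bset m) 0 (S'.sort (· ≤ ·))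
    ++ [Ov (Aset m) S ∪ Ov (Bset m) S']

lemma mem_gadList {S S' P : Finset ℕ} :
    P ∈ gadList m S S' ↔ P ∈ gparts (Aset m) 0 (S.sort (· ≤ ·)) ∨
      P ∈ gparts (Bset m) 0 (S'.sort (· ≤ ·)) ∨ P = Ov (Aset m) S ∪ Ov (Bset m) S' := by
  simp [gadList, List.mem_append, or_assoc]

lemma gadList_length {S S' : Finset ℕ} :
    (gadList m S S').length = 2 * S.card + 2 * S'.card + 1 := by
  simp [gadList, gparts_length]
  omega

end Gadget

lemma gadget_iff (m : ℕ) {S S' : Finset ℕ} (hS : S ⊆ Aset m) (hS' : S' ⊆ Bset m) (X : Finset ℕ) :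
    Transv (gadList m S S') X ↔
      (X ⊆ Finset.range (2*m) ∧ evens (eA m X) = S ∧ evens (eB m X) = S' ∧
        X.card = 2 * (S.card + S'.card) + 1) := by
  classical
  set LA := gparts (Aset m) 0 (S.sort (· ≤ ·)) with hLAdef
  set LB := gparts (Bset m) 0 (S'.sort (· ≤ ·)) with hLBdef
  set Q : Finset ℕ := Ov (Aset m) S ∪ Ov (Bset m) S' with hQdef
  have hsortS : (S.sort (· ≤ ·)).Pairwise (· < ·) := (Finset.sortedLT_sort S).pairwise
  have hsortS' : (S'.sort (· ≤ ·)).Pairwise (· < ·) := (Finset.sortedLT_sort S').pairwise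
  have hmemSA : ∀ s ∈ S.sort (· ≤ ·), s ∈ Aset m := fun s hs => hS ((Finset.mem_sort _).1 hs)
  have hmemSB : ∀ s ∈ S'.sort (· ≤ ·), s ∈ Bset m := fun s hs => hS' ((Finset.mem_sort _).1 hs)
  have hLAsub : ∀ P ∈ LA, P ⊆ Aset m :=
    gparts_subset _ _ _ hsortS (fun s _ => Nat.zero_le s) hmemSA
  have hLBsub : ∀ P ∈ LB, P ⊆ Bset m :=
    gparts_subset _ _ _ hsortS' (fun s _ => Nat.zero_le s) hmemSB
  have hLAle : ∀ P ∈ LA, ∀ x ∈ P, ∃ s ∈ S, x ≤ s := by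
    intro P hP x hx
    obtain ⟨_, _, s, hs, hxs⟩ := gparts_mem_bounds _ _ _ hsortS (fun s _ => Nat.zero_le s) P hP x hx
    exact ⟨s, (Finset.mem_sort _).1 hs, hxs⟩
  have hLBle : ∀ P ∈ LB, ∀ x ∈ P, ∃ s ∈ S', x ≤ s := by
    intro P hP x hx
    obtain ⟨_, _, s, hs, hxs⟩ := gparts_mem_bounds _ _ _ hsortS' (fun s _ => Nat.zero_le s) P hP x hx
    exact ⟨s, (Finset.mem_sort _).1 hs, hxs⟩
  have hOvA_sub : Ov (Aset m) S ⊆ Aset m := Finset.filter_subset _ _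
  have hOvB_sub : Ov (Bset m) S' ⊆ Bset m := Finset.filter_subset _ _
  have hAm : ∀ x ∈ Aset m, x < m := fun x hx => Finset.mem_range.1 hx
  have hBm : ∀ x ∈ Bset m, m ≤ x ∧ x < 2*m := fun x hx => Finset.mem_Ico.1 hx
  have hArange : Aset m ⊆ Finset.range (2*m) := by
    intro x hx; exact Finset.mem_range.2 (by have := hAm x hx; omega)
  have hBrange : Bset m ⊆ Finset.range (2*m) := by
    intro x hx; exact Finset.mem_range.2 (hBm x hx).2
  have hQmem : Q ∈ gadList m S S' := (mem_gadList _).2 (Or.inr (Or.inr rfl))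
  have hLAmem : ∀ P ∈ LA, P ∈ gadList m S S' := fun P hP => (mem_gadList _).2 (Or.inl hP)
  have hLBmem : ∀ P ∈ LB, P ∈ gadList m S S' := fun P hP => (mem_gadList _).2 (Or.inr (Or.inl hP))
  constructor
  · rintro ⟨hc, hcov⟩
    have hXsub : X ⊆ Finset.range (2*m) := by
      intro x hx
      obtain ⟨P, hP, hxP⟩ := hcov x hx
      rcases (mem_gadList _).1 hP with h | h | rfl
      · exact hArange (hLAsub P h hxP)
      · exact hBrange (hLBsub P h hxP)
      · rcases Finset.mem_union.1 hxP with h | h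
        · exact hArange (hOvA_sub h)
        · exact hBrange (hOvB_sub h)
    have hQcard : (X ∩ Q).card = 1 := hc Q hQmem
    have hQsplit : X ∩ Q = (X ∩ Ov (Aset m) S) ∪ (X ∩ Ov (Bset m) S') := by
      rw [hQdef, Finset.inter_union_distrib_left]
    have hdisjAB : Disjoint (X ∩ Ov (Aset m) S) (X ∩ Ov (Bset m) S') := by
      apply Finset.disjoint_left.2
      intro x hx hx'
      have h1 := hAm _ (hOvA_sub (Finset.mem_inter.1 hx).2)
      have h2 := (hBm _ (hOvB_sub (Finset.mem_inter.1 hx').2)).1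
      omega
    have hsum : (X ∩ Ov (Aset m) S).card + (X ∩ Ov (Bset m) S').card = 1 := by
      rw [← Finset.card_union_of_disjoint hdisjAB, ← hQsplit, hQcard]
    -- the two symmetric cases
    rcases Nat.eq_zero_or_pos (X ∩ Ov (Bset m) S').card with hB0 | hBpos
    · -- overflow vertex is on the A side
      have hA1 : (X ∩ Ov (Aset m) S).card = 1 := by omega
      obtain ⟨q, hqeq⟩ := Finset.card_eq_one.1 hA1
      have hqmem : q ∈ X ∩ Ov (Aset m) S := hqeq ▸ Finset.mem_singleton_self q
      obtain ⟨hqX, hqOv⟩ := Finset.mem_inter.1 hqmem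
      obtain ⟨hqA, hqS⟩ := mem_Ov.1 hqOv
      set W := eA m X with hW
      have hqW : q ∈ W := Finset.mem_filter.2 ⟨hqX, hAm q hqA⟩
      have hXOB : ∀ x ∈ X, x ∉ Ov (Bset m) S' := by
        intro x hx hx'
        have : x ∈ X ∩ Ov (Bset m) S' := Finset.mem_inter.2 ⟨hx, hx'⟩
        rw [Finset.card_eq_zero.1 hB0] at this
        simp at this
      have htrA : Transv LA (W.erase q) := by
        constructor
        · intro P hP
          have hPA := hLAsub P hP
          have : W.erase q ∩ P = X ∩ P := by
            ext x
            simp only [Finset.mem_inter, Finset.mem_erase]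
            constructor
            · rintro ⟨⟨_, hxW⟩, hxP⟩
              exact ⟨(Finset.mem_filter.1 hxW).1, hxP⟩
            · rintro ⟨hxX, hxP⟩
              refine ⟨⟨?_, Finset.mem_filter.2 ⟨hxX, hAm x (hPA hxP)⟩⟩, hxP⟩
              intro h
              subst h
              obtain ⟨s, hs, hxs⟩ := hLAle P hP x hxP
              have := hqS s hs
              omega
          rw [this]
          exact hc P (hLAmem P hP)
        · intro y hy
          obtain ⟨hyq, hyW⟩ := Finset.mem_erase.1 hy
          obtain ⟨hyX, hym⟩ := Finset.mem_filter.1 hyW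
          obtain ⟨P, hP, hyP⟩ := hcov y hyX
          rcases (mem_gadList _).1 hP with h | h | rfl
          · exact ⟨P, h, hyP⟩
          · exfalso
            have := (hBm y (hLBsub P h hyP)).1
            omega
          · exfalso
            rcases Finset.mem_union.1 hyP with h | h
            · have : y ∈ X ∩ Ov (Aset m) S := Finset.mem_inter.2 ⟨hyX, h⟩
              rw [hqeq] at this
              exact hyq (Finset.mem_singleton.1 this)
            · exact hXOB y hyX h
      obtain ⟨hWsub, hWcard, hWev⟩ := (side_iff' _ _ hS _).1 htrA
      have hqprop := join_odd hWev hWcard hqS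
      rw [Finset.insert_erase hqW] at hqprop
      have htrB : Transv LB (eB m X) := by
        constructor
        · intro P hP
          rw [← inter_eB m (hLBsub P hP)]
          exact hc P (hLBmem P hP)
        · intro y hy
          obtain ⟨hyX, hym⟩ := Finset.mem_filter.1 hy
          obtain ⟨P, hP, hyP⟩ := hcov y hyX
          rcases (mem_gadList _).1 hP with h | h | rfl
          · exfalso
            have := hAm y (hLAsub P h hyP)
            omega
          · exact ⟨P, h, hyP⟩
          · exfalso
            rcases Finset.mem_union.1 hyP with h | h
            · have := hAm y (hOvA_sub h)
              omega
            · exact hXOB y hyX h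
      obtain ⟨hBsub, hBcard, hBev⟩ := (side_iff' _ _ hS' _).1 htrB
      refine ⟨hXsub, hqprop.2.1, hBev, ?_⟩
      have h1 : W.card = 2 * S.card + 1 := hqprop.2.2
      have h2 : X.card = W.card + (eB m X).card := by rw [hW, card_eA_add_eB]
      rw [h2, h1, hBcard]
      ring
    · -- overflow vertex is on the B side
      have hB1 : (X ∩ Ov (Bset m) S').card = 1 := by omega
      have hA0 : (X ∩ Ov (Aset m) S).card = 0 := by omega
      obtain ⟨q, hqeq⟩ := Finset.card_eq_one.1 hB1
      have hqmem : q ∈ X ∩ Ov (Bset m) S' := hqeq ▸ Finset.mem_singleton_self q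
      obtain ⟨hqX, hqOv⟩ := Finset.mem_inter.1 hqmem
      obtain ⟨hqB, hqS'⟩ := mem_Ov.1 hqOv
      set W := eB m X with hW
      have hqW : q ∈ W := Finset.mem_filter.2 ⟨hqX, (hBm q hqB).1⟩
      have hXOA : ∀ x ∈ X, x ∉ Ov (Aset m) S := by
        intro x hx hx'
        have : x ∈ X ∩ Ov (Aset m) S := Finset.mem_inter.2 ⟨hx, hx'⟩
        rw [Finset.card_eq_zero.1 hA0] at this
        simp at this
      have htrB : Transv LB (W.erase q) := by
        constructor
        · intro P hP
          have hPB := hLBsub P hP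
          have : W.erase q ∩ P = X ∩ P := by
            ext x
            simp only [Finset.mem_inter, Finset.mem_erase]
            constructor
            · rintro ⟨⟨_, hxW⟩, hxP⟩
              exact ⟨(Finset.mem_filter.1 hxW).1, hxP⟩
            · rintro ⟨hxX, hxP⟩
              refine ⟨⟨?_, Finset.mem_filter.2 ⟨hxX, (hBm x (hPB hxP)).1⟩⟩, hxP⟩
              intro h
              subst h
              obtain ⟨s, hs, hxs⟩ := hLBle P hP x hxP
              have := hqS' s hs
              omega
          rw [this]
          exact hc P (hLBmem P hP)
        · intro y hy
          obtain ⟨hyq, hyW⟩ := Finset.mem_erase.1 hy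
          obtain ⟨hyX, hym⟩ := Finset.mem_filter.1 hyW
          obtain ⟨P, hP, hyP⟩ := hcov y hyX
          rcases (mem_gadList _).1 hP with h | h | rfl
          · exfalso
            have := hAm y (hLAsub P h hyP)
            omega
          · exact ⟨P, h, hyP⟩
          · exfalso
            rcases Finset.mem_union.1 hyP with h | h
            · exact hXOA y hyX h
            · have : y ∈ X ∩ Ov (Bset m) S' := Finset.mem_inter.2 ⟨hyX, h⟩
              rw [hqeq] at this
              exact hyq (Finset.mem_singleton.1 this)
      obtain ⟨hWsub, hWcard, hWev⟩ := (side_iff' _ _ hS' _).1 htrB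
      have hqprop := join_odd hWev hWcard hqS'
      rw [Finset.insert_erase hqW] at hqprop
      have htrA : Transv LA (eA m X) := by
        constructor
        · intro P hP
          rw [← inter_eA m (hLAsub P hP)]
          exact hc P (hLAmem P hP)
        · intro y hy
          obtain ⟨hyX, hym⟩ := Finset.mem_filter.1 hy
          obtain ⟨P, hP, hyP⟩ := hcov y hyX
          rcases (mem_gadList _).1 hP with h | h | rfl
          · exact ⟨P, h, hyP⟩
          · exfalso
            have := (hBm y (hLBsub P h hyP)).1
            omega
          · exfalso
            rcases Finset.mem_union.1 hyP with h | h
            · exact hXOA y hyX h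
            · have := (hBm y (hOvB_sub h)).1
              omega
      obtain ⟨hAsub, hAcard, hAev⟩ := (side_iff' _ _ hS _).1 htrA
      refine ⟨hXsub, hAev, hqprop.2.1, ?_⟩
      have h1 : W.card = 2 * S'.card + 1 := hqprop.2.2
      have h2 : X.card = (eA m X).card + W.card := by rw [hW, card_eA_add_eB]
      rw [h2, h1, hAcard]
      ring
  · rintro ⟨hXsub, hevA, hevB, hcard⟩
    have hcevA := card_evens (eA m X)
    have hcevB := card_evens (eB m X)
    rw [hevA] at hcevA
    rw [hevB] at hcevB
    have hab := card_eA_add_eB m X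
    have hcases : ((eA m X).card = 2 * S.card + 1 ∧ (eB m X).card = 2 * S'.card) ∨
        ((eA m X).card = 2 * S.card ∧ (eB m X).card = 2 * S'.card + 1) := by
      omega
    have heAsub : eA m X ⊆ Aset m := eA_subset m X hXsub
    have heBsub : eB m X ⊆ Bset m := eB_subset m X hXsub
    rcases hcases with ⟨hA, hB⟩ | ⟨hA, hB⟩
    · -- overflow on A side
      obtain ⟨q, hqW, hqS, hercard, herev, herle⟩ := split_odd hevA hA
      have hqA : q ∈ Aset m := heAsub hqW
      have hqX : q ∈ X := (Finset.mem_filter.1 hqW).1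
      have htrA : Transv LA ((eA m X).erase q) :=
        (side_iff' _ _ hS _).2 ⟨(Finset.erase_subset _ _).trans heAsub, hercard, herev⟩
      have htrB : Transv LB (eB m X) :=
        (side_iff' _ _ hS' _).2 ⟨heBsub, hB, hevB⟩
      constructor
      · intro P hP
        rcases (mem_gadList _).1 hP with h | h | rfl
        · have hPA := hLAsub P h
          have heq : X ∩ P = (eA m X).erase q ∩ P := by
            ext x
            simp only [Finset.mem_inter, Finset.mem_erase]
            constructor
            · rintro ⟨hxX, hxP⟩
              refine ⟨⟨?_, Finset.mem_filter.2 ⟨hxX, hAm x (hPA hxP)⟩⟩, hxP⟩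
              intro hxq
              subst hxq
              obtain ⟨s, hs, hxs⟩ := hLAle P h x hxP
              have := hqS s hs
              omega
            · rintro ⟨⟨_, hxW⟩, hxP⟩
              exact ⟨(Finset.mem_filter.1 hxW).1, hxP⟩
          rw [heq]
          exact htrA.1 P h
        · have hPB := hLBsub P h
          rw [inter_eB m hPB]
          exact htrB.1 P h
        · have heq : X ∩ Q = {q} := by
            ext x
            simp only [Finset.mem_inter, Finset.mem_singleton]
            constructor
            · rintro ⟨hxX, hxQ⟩
              rcases Finset.mem_union.1 hxQ with h | h
              · obtain ⟨hxA, hxS⟩ := mem_Ov.1 h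
                have hxW : x ∈ eA m X := Finset.mem_filter.2 ⟨hxX, hAm x hxA⟩
                by_contra hxq
                obtain ⟨s, hs, hxs⟩ := herle x (Finset.mem_erase.2 ⟨hxq, hxW⟩)
                have := hxS s hs
                omega
              · obtain ⟨hxB, hxS⟩ := mem_Ov.1 h
                have hxW : x ∈ eB m X := Finset.mem_filter.2 ⟨hxX, (hBm x hxB).1⟩
                exfalso
                obtain ⟨s, hs, hxs⟩ := elems_le_of_evens hevB hB x hxW
                have := hxS s hs
                omega
            · rintro rfl
              exact ⟨hqX, Finset.mem_union_left _ (mem_Ov.2 ⟨hqA, hqS⟩)⟩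
          rw [heq, Finset.card_singleton]
      · intro x hx
        rcases lt_or_ge x m with hxm | hxm
        · have hxW : x ∈ eA m X := Finset.mem_filter.2 ⟨hx, hxm⟩
          by_cases hxq : x = q
          · subst hxq
            exact ⟨Q, hQmem, Finset.mem_union_left _ (mem_Ov.2 ⟨hqA, hqS⟩)⟩
          · obtain ⟨P, hP, hxP⟩ := htrA.2 x (Finset.mem_erase.2 ⟨hxq, hxW⟩)
            exact ⟨P, hLAmem P hP, hxP⟩
        · have hxW : x ∈ eB m X := Finset.mem_filter.2 ⟨hx, hxm⟩
          obtain ⟨P, hP, hxP⟩ := htrB.2 x hxW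
          exact ⟨P, hLBmem P hP, hxP⟩
    · -- overflow on B side
      obtain ⟨q, hqW, hqS', hercard, herev, herle⟩ := split_odd hevB hB
      have hqB : q ∈ Bset m := heBsub hqW
      have hqX : q ∈ X := (Finset.mem_filter.1 hqW).1
      have htrB : Transv LB ((eB m X).erase q) :=
        (side_iff' _ _ hS' _).2 ⟨(Finset.erase_subset _ _).trans heBsub, hercard, herev⟩
      have htrA : Transv LA (eA m X) :=
        (side_iff' _ _ hS _).2 ⟨heAsub, hA, hevA⟩
      constructor
      · intro P hP
        rcases (mem_gadList _).1 hP with h | h | rfl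
        · have hPA := hLAsub P h
          rw [inter_eA m hPA]
          exact htrA.1 P h
        · have hPB := hLBsub P h
          have heq : X ∩ P = (eB m X).erase q ∩ P := by
            ext x
            simp only [Finset.mem_inter, Finset.mem_erase]
            constructor
            · rintro ⟨hxX, hxP⟩
              refine ⟨⟨?_, Finset.mem_filter.2 ⟨hxX, (hBm x (hPB hxP)).1⟩⟩, hxP⟩
              intro hxq
              subst hxq
              obtain ⟨s, hs, hxs⟩ := hLBle P h x hxP
              have := hqS' s hs
              omega
            · rintro ⟨⟨_, hxW⟩, hxP⟩
              exact ⟨(Finset.mem_filter.1 hxW).1, hxP⟩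
          rw [heq]
          exact htrB.1 P h
        · have heq : X ∩ Q = {q} := by
            ext x
            simp only [Finset.mem_inter, Finset.mem_singleton]
            constructor
            · rintro ⟨hxX, hxQ⟩
              rcases Finset.mem_union.1 hxQ with h | h
              · obtain ⟨hxA, hxS⟩ := mem_Ov.1 h
                have hxW : x ∈ eA m X := Finset.mem_filter.2 ⟨hxX, hAm x hxA⟩
                exfalso
                obtain ⟨s, hs, hxs⟩ := elems_le_of_evens hevA hA x hxW
                have := hxS s hs
                omega
              · obtain ⟨hxB, hxS⟩ := mem_Ov.1 h
                have hxW : x ∈ eB m X := Finset.mem_filter.2 ⟨hxX, (hBm x hxB).1⟩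
                by_contra hxq
                obtain ⟨s, hs, hxs⟩ := herle x (Finset.mem_erase.2 ⟨hxq, hxW⟩)
                have := hxS s hs
                omega
            · rintro rfl
              exact ⟨hqX, Finset.mem_union_right _ (mem_Ov.2 ⟨hqB, hqS'⟩)⟩
          rw [heq, Finset.card_singleton]
      · intro x hx
        rcases lt_or_ge x m with hxm | hxm
        · have hxW : x ∈ eA m X := Finset.mem_filter.2 ⟨hx, hxm⟩
          obtain ⟨P, hP, hxP⟩ := htrA.2 x hxW
          exact ⟨P, hLAmem P hP, hxP⟩
        · have hxW : x ∈ eB m X := Finset.mem_filter.2 ⟨hx, hxm⟩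
          by_cases hxq : x = q
          · subst hxq
            exact ⟨Q, hQmem, Finset.mem_union_right _ (mem_Ov.2 ⟨hqB, hqS'⟩)⟩
          · obtain ⟨P, hP, hxP⟩ := htrB.2 x (Finset.mem_erase.2 ⟨hxq, hxW⟩)
            exact ⟨P, hLBmem P hP, hxP⟩

lemma transv_ofFn_iff {r : ℕ} {parts : Fin r → Finset ℕ} {Y : Finset ℕ} :
    Transv (List.ofFn parts) Y ↔
      ((∀ i, (Y ∩ parts i).card = 1) ∧ ∀ y ∈ Y, ∃ i, y ∈ parts i) := by
  constructor
  · rintro ⟨hc, hcov⟩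
    refine ⟨fun i => hc _ ((List.mem_ofFn).2 ⟨i, rfl⟩), fun y hy => ?_⟩
    obtain ⟨P, hP, hyP⟩ := hcov y hy
    obtain ⟨i, rfl⟩ := (List.mem_ofFn).1 hP
    exact ⟨i, hyP⟩
  · rintro ⟨hc, hcov⟩
    refine ⟨fun P hP => ?_, fun y hy => ?_⟩
    · obtain ⟨i, rfl⟩ := (List.mem_ofFn).1 hP
      exact hc i
    · obtain ⟨i, hi⟩ := hcov y hy
      exact ⟨parts i, (List.mem_ofFn).2 ⟨i, rfl⟩, hi⟩

lemma transv_shift {m r : ℕ} {parts : Fin r → Finset ℕ}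
    (hsub : ∀ i, parts i ⊆ Finset.range m) {Y : Finset ℕ} :
    Transv (List.ofFn (fun j => (parts j).image (· + m))) Y ↔
      ∃ Z, ((∀ i, (Z ∩ parts i).card = 1) ∧ ∀ z ∈ Z, ∃ i, z ∈ parts i) ∧
        Y = Z.image (· + m) := by
  have hinj : Function.Injective (· + m) := add_left_injective m
  rw [transv_ofFn_iff]
  constructor
  · rintro ⟨hc, hcov⟩
    have hYm : ∀ y ∈ Y, m ≤ y ∧ y < 2 * m := by
      intro y hy
      obtain ⟨i, hi⟩ := hcov y hy
      obtain ⟨p, hp, rfl⟩ := Finset.mem_image.1 hi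
      have := Finset.mem_range.1 (hsub i hp)
      omega
    set Z := Y.image (· - m) with hZ
    have hYZ : Y = Z.image (· + m) := by
      ext y
      simp only [hZ, Finset.mem_image]
      constructor
      · intro hy
        exact ⟨y - m, ⟨y, hy, rfl⟩, by have := (hYm y hy).1; omega⟩
      · rintro ⟨z, ⟨w, hw, rfl⟩, rfl⟩
        have := (hYm w hw).1
        have hww : w - m + m = w := by omega
        rw [hww]
        exact hw
    have hkey : ∀ i, Y ∩ (parts i).image (· + m) = (Z ∩ parts i).image (· + m) := by
      intro i
      ext y
      simp only [Finset.mem_inter, Finset.mem_image, hZ]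
      constructor
      · rintro ⟨hy, p, hp, rfl⟩
        exact ⟨p, ⟨⟨p + m, hy, by omega⟩, hp⟩, rfl⟩
      · rintro ⟨p, ⟨⟨w, hw, rfl⟩, hp⟩, rfl⟩
        have := (hYm w hw).1
        have hww : w - m + m = w := by omega
        rw [hww]
        exact ⟨hw, ⟨w - m, hp, hww⟩⟩
    refine ⟨Z, ⟨fun i => ?_, fun z hz => ?_⟩, hYZ⟩
    · have := hc i
      rw [hkey i, Finset.card_image_of_injective _ hinj] at this
      exact this
    · obtain ⟨w, hw, rfl⟩ := Finset.mem_image.1 (hZ ▸ hz)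
      obtain ⟨i, hi⟩ := hcov w hw
      obtain ⟨p, hp, hpw⟩ := Finset.mem_image.1 hi
      refine ⟨i, ?_⟩
      have : w - m = p := by omega
      rw [this]
      exact hp
  · rintro ⟨Z, ⟨hc, hcov⟩, rfl⟩
    have hkey : ∀ i, Z.image (· + m) ∩ (parts i).image (· + m) = (Z ∩ parts i).image (· + m) := by
      intro i
      rw [← Finset.image_inter _ _ hinj]
    refine ⟨fun i => ?_, fun y hy => ?_⟩
    · rw [hkey i, Finset.card_image_of_injective _ hinj]
      exact hc i
    · obtain ⟨z, hz, rfl⟩ := Finset.mem_image.1 hy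
      obtain ⟨i, hi⟩ := hcov z hz
      exact ⟨i, Finset.mem_image.2 ⟨z, hi, rfl⟩⟩

lemma gparts_pairwise (T : Finset ℕ) : ∀ (l : List ℕ) (p : ℕ),
    l.Pairwise (· < ·) → (∀ s ∈ l, p ≤ s) →
    (gparts T p l).Pairwise Disjoint := by
  intro l
  induction l with
  | nil => intro p _ _; exact List.Pairwise.nil
  | cons s l ih =>
    intro p hsort hp
    have htail : ∀ t ∈ l, s < t := (List.pairwise_cons.1 hsort).1
    have hsort' : l.Pairwise (· < ·) := (List.pairwise_cons.1 hsort).2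
    have hp' : ∀ t ∈ l, s + 1 ≤ t := fun t ht => htail t ht
    have hbound : ∀ P ∈ gparts T (s+1) l, ∀ x ∈ P, s + 1 ≤ x := by
      intro P hP x hx
      exact (gparts_mem_bounds T l (s+1) hsort' hp' P hP x hx).2.1
    show (_ :: _ :: _).Pairwise Disjoint
    refine List.Pairwise.cons ?_ (List.Pairwise.cons ?_ (ih (s+1) hsort' hp'))
    · intro P hP
      rcases List.mem_cons.1 hP with rfl | hP2
      · apply Finset.disjoint_left.2
        intro a ha ha'
        rcases Finset.mem_filter.1 ha with ⟨_, _, has⟩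
        rcases Finset.mem_singleton.1 ha' with rfl
        omega
      · apply Finset.disjoint_left.2
        intro a ha ha'
        rcases Finset.mem_filter.1 ha with ⟨_, _, has⟩
        have := hbound P hP2 a ha'
        omega
    · intro P hP
      apply Finset.disjoint_left.2
      intro a ha ha'
      rcases Finset.mem_singleton.1 ha with rfl
      have := hbound P hP a ha'
      omega

lemma gadList_subset (m : ℕ) {S S' : Finset ℕ} (hS : S ⊆ Aset m) (hS' : S' ⊆ Bset m) :
    ∀ P ∈ gadList m S S', P ⊆ Finset.range (2*m) := by
  have hArange : Aset m ⊆ Finset.range (2*m) := by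
    intro x hx; exact Finset.mem_range.2 (by have := Finset.mem_range.1 hx; omega)
  have hBrange : Bset m ⊆ Finset.range (2*m) := by
    intro x hx; exact Finset.mem_range.2 (Finset.mem_Ico.1 hx).2
  intro P hP
  rcases (mem_gadList _).1 hP with h | h | rfl
  · exact (gparts_subset _ _ _ ((Finset.sortedLT_sort S).pairwise) (fun x _ => Nat.zero_le x)
      (fun x hx => hS ((Finset.mem_sort _).1 hx)) P h).trans hArange
  · exact (gparts_subset _ _ _ ((Finset.sortedLT_sort S').pairwise) (fun x _ => Nat.zero_le x)
      (fun x hx => hS' ((Finset.mem_sort _).1 hx)) P h).trans hBrange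
  · intro x hx
    rcases Finset.mem_union.1 hx with h | h
    · exact hArange (Finset.filter_subset _ _ h)
    · exact hBrange (Finset.filter_subset _ _ h)

lemma gadList_pairwise (m : ℕ) {S S' : Finset ℕ} (hS : S ⊆ Aset m) (hS' : S' ⊆ Bset m) :
    (gadList m S S').Pairwise Disjoint := by
  have hsortS : (S.sort (· ≤ ·)).Pairwise (· < ·) := (Finset.sortedLT_sort S).pairwise
  have hsortS' : (S'.sort (· ≤ ·)).Pairwise (· < ·) := (Finset.sortedLT_sort S').pairwise
  have hLAsub : ∀ P ∈ gparts (Aset m) 0 (S.sort (· ≤ ·)), P ⊆ Aset m :=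
    gparts_subset _ _ _ hsortS (fun x _ => Nat.zero_le x)
      (fun x hx => hS ((Finset.mem_sort _).1 hx))
  have hLBsub : ∀ P ∈ gparts (Bset m) 0 (S'.sort (· ≤ ·)), P ⊆ Bset m :=
    gparts_subset _ _ _ hsortS' (fun x _ => Nat.zero_le x)
      (fun x hx => hS' ((Finset.mem_sort _).1 hx))
  have hLAle : ∀ P ∈ gparts (Aset m) 0 (S.sort (· ≤ ·)), ∀ x ∈ P, ∃ s ∈ S, x ≤ s := by
    intro P hP x hx
    obtain ⟨_, _, s, hs, hxs⟩ := gparts_mem_bounds _ _ _ hsortS (fun t _ => Nat.zero_le t) P hP x hx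
    exact ⟨s, (Finset.mem_sort _).1 hs, hxs⟩
  have hLBle : ∀ P ∈ gparts (Bset m) 0 (S'.sort (· ≤ ·)), ∀ x ∈ P, ∃ s ∈ S', x ≤ s := by
    intro P hP x hx
    obtain ⟨_, _, s, hs, hxs⟩ := gparts_mem_bounds _ _ _ hsortS' (fun t _ => Nat.zero_le t) P hP x hx
    exact ⟨s, (Finset.mem_sort _).1 hs, hxs⟩
  have hAB : ∀ x ∈ Aset m, ∀ y ∈ Bset m, x ≠ y := by
    intro x hx y hy
    have h1 := Finset.mem_range.1 hx
    have h2 := (Finset.mem_Ico.1 hy).1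
    omega
  rw [gadList]
  apply List.pairwise_append.2
  refine ⟨?_, ?_, ?_⟩
  · apply List.pairwise_append.2
    refine ⟨gparts_pairwise _ _ _ hsortS (fun t _ => Nat.zero_le t),
      gparts_pairwise _ _ _ hsortS' (fun t _ => Nat.zero_le t), ?_⟩
    intro P hP P' hP'
    apply Finset.disjoint_left.2
    intro a ha ha'
    exact hAB a (hLAsub P hP ha) a (hLBsub P' hP' ha') rfl
  · exact List.pairwise_singleton _ _
  · intro P hP P' hP'
    rcases List.mem_singleton.1 hP' with rfl
    rcases List.mem_append.1 hP with h | h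
    · apply Finset.disjoint_left.2
      intro a ha ha'
      rcases Finset.mem_union.1 ha' with h' | h'
      · obtain ⟨s, hs, has⟩ := hLAle P h a ha
        have := (mem_Ov.1 h').2 s hs
        omega
      · exact hAB a (hLAsub P h ha) a (Finset.filter_subset _ _ h') rfl
    · apply Finset.disjoint_left.2
      intro a ha ha'
      rcases Finset.mem_union.1 ha' with h' | h'
      · exact hAB a (Finset.filter_subset _ _ h') a (hLBsub P h ha) rfl
      · obtain ⟨s, hs, has⟩ := hLBle P h a ha
        have := (mem_Ov.1 h').2 s hs
        omega

/-- parts of a product block: a block on the bottom half and a shifted block on the top half -/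
def prodList (m : ℕ) {r₁ r₂ : ℕ} (u : Block (Finset.range m) r₁)
    (v : Block (Finset.range m) r₂) : List (Finset ℕ) :=
  List.ofFn u.parts ++ List.ofFn (fun j => (v.parts j).image (· + m))

lemma prodList_length (m : ℕ) {r₁ r₂ : ℕ} (u : Block (Finset.range m) r₁)
    (v : Block (Finset.range m) r₂) : (prodList m u v).length = r₁ + r₂ := by
  simp [prodList]

lemma prodList_nonempty (m : ℕ) {r₁ r₂ : ℕ} (u : Block (Finset.range m) r₁)
    (v : Block (Finset.range m) r₂) : ∀ P ∈ prodList m u v, P.Nonempty := by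
  intro P hP
  rcases List.mem_append.1 hP with h | h
  · obtain ⟨i, rfl⟩ := (List.mem_ofFn).1 h
    exact u.nonempty i
  · obtain ⟨j, rfl⟩ := (List.mem_ofFn).1 h
    exact (v.nonempty j).image _

lemma prodList_subset (m : ℕ) {r₁ r₂ : ℕ} (u : Block (Finset.range m) r₁)
    (v : Block (Finset.range m) r₂) : ∀ P ∈ prodList m u v, P ⊆ Finset.range (2*m) := by
  intro P hP
  rcases List.mem_append.1 hP with h | h
  · obtain ⟨i, rfl⟩ := (List.mem_ofFn).1 h
    intro x hx
    have := Finset.mem_range.1 (u.subset i hx)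
    exact Finset.mem_range.2 (by omega)
  · obtain ⟨j, rfl⟩ := (List.mem_ofFn).1 h
    intro x hx
    obtain ⟨p, hp, rfl⟩ := Finset.mem_image.1 hx
    have := Finset.mem_range.1 (v.subset j hp)
    exact Finset.mem_range.2 (by omega)

lemma prodList_pairwise (m : ℕ) {r₁ r₂ : ℕ} (u : Block (Finset.range m) r₁)
    (v : Block (Finset.range m) r₂) : (prodList m u v).Pairwise Disjoint := by
  have hinj : Function.Injective (· + m) := add_left_injective m
  rw [prodList]
  apply List.pairwise_append.2
  refine ⟨?_, ?_, ?_⟩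
  · apply List.pairwise_iff_get.2
    intro i j hij
    rw [List.get_ofFn, List.get_ofFn]
    apply u.disj
    intro h
    have : i.1 = j.1 := by
      have h1 : ((Fin.cast (List.length_ofFn (f := u.parts)) i) : Fin r₁).1 = i.1 := rfl
      have h2 : ((Fin.cast (List.length_ofFn (f := u.parts)) j) : Fin r₁).1 = j.1 := rfl
      rw [← h1, ← h2, h]
    omega
  · apply List.pairwise_iff_get.2
    intro i j hij
    rw [List.get_ofFn, List.get_ofFn]
    rw [Finset.disjoint_image hinj]
    apply v.disj
    intro h
    have : i.1 = j.1 := by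
      have h1 : ((Fin.cast (List.length_ofFn) i) : Fin r₂).1 = i.1 := rfl
      have h2 : ((Fin.cast (List.length_ofFn) j) : Fin r₂).1 = j.1 := rfl
      rw [← h1, ← h2, h]
    omega
  · intro P hP P' hP'
    obtain ⟨i, rfl⟩ := (List.mem_ofFn).1 hP
    obtain ⟨j, rfl⟩ := (List.mem_ofFn).1 hP'
    apply Finset.disjoint_left.2
    intro a ha ha'
    have h1 := Finset.mem_range.1 (u.subset i ha)
    obtain ⟨p, hp, rfl⟩ := Finset.mem_image.1 ha'
    omega

lemma transv_prodList_iff (m : ℕ) {r₁ r₂ : ℕ} (u : Block (Finset.range m) r₁)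
    (v : Block (Finset.range m) r₂) (X : Finset ℕ) :
    Transv (prodList m u v) X ↔
      (eA m X ∈ u.edges ∧ ∃ Z ∈ v.edges, eB m X = Z.image (· + m)) := by
  have husub : ∀ i, u.parts i ⊆ Aset m := u.subset
  have hvsub : ∀ j, v.parts j ⊆ Finset.range m := v.subset
  have hshB : ∀ j, (v.parts j).image (· + m) ⊆ Bset m := by
    intro j x hx
    obtain ⟨p, hp, rfl⟩ := Finset.mem_image.1 hx
    have := Finset.mem_range.1 (v.subset j hp)
    exact Finset.mem_Ico.2 ⟨by omega, by omega⟩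
  constructor
  · rintro ⟨hc, hcov⟩
    have htrA : Transv (List.ofFn u.parts) (eA m X) := by
      constructor
      · intro P hP
        obtain ⟨i, rfl⟩ := (List.mem_ofFn).1 hP
        rw [← inter_eA m (husub i)]
        exact hc _ (List.mem_append_left _ hP)
      · intro y hy
        obtain ⟨hyX, hym⟩ := Finset.mem_filter.1 hy
        obtain ⟨P, hP, hyP⟩ := hcov y hyX
        rcases List.mem_append.1 hP with h | h
        · exact ⟨P, h, hyP⟩
        · exfalso
          obtain ⟨j, rfl⟩ := (List.mem_ofFn).1 h
          have := (Finset.mem_Ico.1 (hshB j hyP)).1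
          omega
    have htrB : Transv (List.ofFn (fun j => (v.parts j).image (· + m))) (eB m X) := by
      constructor
      · intro P hP
        obtain ⟨j, rfl⟩ := (List.mem_ofFn).1 hP
        rw [← inter_eB m (hshB j)]
        exact hc _ (List.mem_append_right _ hP)
      · intro y hy
        obtain ⟨hyX, hym⟩ := Finset.mem_filter.1 hy
        obtain ⟨P, hP, hyP⟩ := hcov y hyX
        rcases List.mem_append.1 hP with h | h
        · exfalso
          obtain ⟨i, rfl⟩ := (List.mem_ofFn).1 h
          have := Finset.mem_range.1 (husub i hyP)
          omega
        · exact ⟨P, h, hyP⟩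
    obtain ⟨Z, hZ, hZeq⟩ := (transv_shift hvsub).1 htrB
    refine ⟨transv_ofFn_iff.1 htrA, Z, ?_, hZeq⟩
    exact hZ
  · rintro ⟨huA, Z, hZ, hZeq⟩
    have htrA : Transv (List.ofFn u.parts) (eA m X) := transv_ofFn_iff.2 huA
    have hZ' : ((∀ i, (Z ∩ v.parts i).card = 1) ∧ ∀ z ∈ Z, ∃ i, z ∈ v.parts i) := hZ
    have htrB : Transv (List.ofFn (fun j => (v.parts j).image (· + m))) (eB m X) :=
      (transv_shift hvsub).2 ⟨Z, hZ', hZeq⟩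
    constructor
    · intro P hP
      rcases List.mem_append.1 hP with h | h
      · obtain ⟨i, rfl⟩ := (List.mem_ofFn).1 h
        show (X ∩ u.parts i).card = 1
        rw [inter_eA m (husub i)]
        exact htrA.1 _ h
      · obtain ⟨j, rfl⟩ := (List.mem_ofFn).1 h
        show (X ∩ (v.parts j).image (· + m)).card = 1
        rw [inter_eB m (hshB j)]
        exact htrB.1 _ h
    · intro x hx
      rcases lt_or_ge x m with hxm | hxm
      · obtain ⟨P, hP, hxP⟩ := htrA.2 x (Finset.mem_filter.2 ⟨hx, hxm⟩)
        exact ⟨P, List.mem_append_left _ hP, hxP⟩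
      · obtain ⟨P, hP, hxP⟩ := htrB.2 x (Finset.mem_filter.2 ⟨hx, hxm⟩)
        exact ⟨P, List.mem_append_right _ hP, hxP⟩

lemma exactCover_union {V : Finset ℕ} {r k₁ k₂ : ℕ} {F₁ F₂ : Set (Finset ℕ)}
    (h₁ : ExactCover V r k₁ F₁) (h₂ : ExactCover V r k₂ F₂) (hdisj : Disjoint F₁ F₂) :
    ExactCover V r (k₁ + k₂) (F₁ ∪ F₂) := by
  obtain ⟨B₁, hd₁, hu₁⟩ := h₁
  obtain ⟨B₂, hd₂, hu₂⟩ := h₂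
  have hs₁ : ∀ i, (B₁ i).edges ⊆ F₁ := fun i => hu₁ ▸ Set.subset_iUnion (fun i => (B₁ i).edges) i
  have hs₂ : ∀ i, (B₂ i).edges ⊆ F₂ := fun i => hu₂ ▸ Set.subset_iUnion (fun i => (B₂ i).edges) i
  have hrep : ∀ i : Fin (k₁ + k₂), (∃ i₁ : Fin k₁, i = Fin.castAdd k₂ i₁) ∨
      (∃ i₂ : Fin k₂, i = Fin.natAdd k₁ i₂) := by
    intro i
    rcases lt_or_ge i.1 k₁ with h | h
    · exact Or.inl ⟨⟨i.1, h⟩, Fin.ext rfl⟩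
    · refine Or.inr ⟨⟨i.1 - k₁, by omega⟩, Fin.ext ?_⟩
      simp only [Fin.natAdd]
      omega
  refine ⟨fun i => Fin.addCases (fun i₁ => B₁ i₁) (fun i₂ => B₂ i₂) i, ?_, ?_⟩
  · intro i j hij
    rcases hrep i with ⟨i', rfl⟩ | ⟨i', rfl⟩ <;> rcases hrep j with ⟨j', rfl⟩ | ⟨j', rfl⟩ <;>
      simp only [Fin.addCases_left, Fin.addCases_right]
    · exact hd₁ i' j' (fun h => hij (by rw [h]))
    · exact Set.disjoint_of_subset (hs₁ i') (hs₂ j') hdisj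
    · exact (Set.disjoint_of_subset (hs₁ j') (hs₂ i') hdisj).symm
    · exact hd₂ i' j' (fun h => hij (by rw [h]))
  · ext e
    simp only [Set.mem_iUnion, Set.mem_union]
    constructor
    · rintro ⟨i, hi⟩
      rcases hrep i with ⟨i', rfl⟩ | ⟨i', rfl⟩
      · rw [Fin.addCases_left] at hi
        exact Or.inl (hu₁ ▸ Set.mem_iUnion.2 ⟨i', hi⟩)
      · rw [Fin.addCases_right] at hi
        exact Or.inr (hu₂ ▸ Set.mem_iUnion.2 ⟨i', hi⟩)
    · rintro (he | he)
      · obtain ⟨i, hi⟩ := Set.mem_iUnion.1 (hu₁ ▸ he : e ∈ ⋃ i, (B₁ i).edges)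
        exact ⟨Fin.castAdd k₂ i, by rw [Fin.addCases_left]; exact hi⟩
      · obtain ⟨i, hi⟩ := Set.mem_iUnion.1 (hu₂ ▸ he : e ∈ ⋃ i, (B₂ i).edges)
        exact ⟨Fin.natAdd k₁ i, by rw [Fin.addCases_right]; exact hi⟩

lemma exactCover_prod (m r₁ r₂ : ℕ) :
    ExactCover (Finset.range (2*m)) (r₁ + r₂) (f r₁ m * f r₂ m)
      {X | X ⊆ Finset.range (2*m) ∧ X.card = r₁ + r₂ ∧ (eA m X).card = r₁} := by
  classical
  obtain ⟨c₁, hc₁disj, hc₁cov⟩ := exists_cover_f r₁ m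
  obtain ⟨c₂, hc₂disj, hc₂cov⟩ := exists_cover_f r₂ m
  have hcard : (Finset.univ : Finset (Fin (f r₁ m) × Fin (f r₂ m))).card = f r₁ m * f r₂ m := by
    simp
  rw [← hcard]
  refine exactCover_of_finset _ _ _ Finset.univ
    (fun q _ => Block.ofList _ _ (prodList m (c₁ q.1) (c₂ q.2))
      (by rw [prodList_length])
      (prodList_nonempty _ _ _) (prodList_subset _ _ _) (prodList_pairwise _ _ _)) ?_ ?_ ?_
  · -- disjointness
    intro q hq q' hq' hne
    apply Set.disjoint_left.2
    intro X hX hX'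
    rw [Block.ofList_edges] at hX hX'
    rw [transv_prodList_iff] at hX hX'
    obtain ⟨hA, Z, hZ, hZeq⟩ := hX
    obtain ⟨hA', Z', hZ', hZeq'⟩ := hX'
    have hZZ : Z = Z' := by
      have h0 : Z.image (· + m) = Z'.image (· + m) := by rw [← hZeq, ← hZeq']
      exact Finset.image_injective (add_left_injective m) h0

    subst hZZ
    by_cases h1 : q.1 = q'.1
    · have h2 : q.2 ≠ q'.2 := fun h => hne (Prod.ext h1 h)
      exact Set.disjoint_left.1 (hc₂disj q.2 q'.2 h2) hZ hZ'
    · exact Set.disjoint_left.1 (hc₁disj q.1 q'.1 h1) hA hA'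
  · -- edges are inside the family
    intro q hq X hX
    rw [Block.ofList_edges, transv_prodList_iff] at hX
    obtain ⟨hA, Z, hZ, hZeq⟩ := hX
    have hXsub : X ⊆ Finset.range (2*m) := by
      intro x hx
      rcases lt_or_ge x m with h | h
      · have : x ∈ eA m X := Finset.mem_filter.2 ⟨hx, h⟩
        have := Block.subset_of_mem_edges _ hA this
        have := Finset.mem_range.1 this
        exact Finset.mem_range.2 (by omega)
      · have hxB : x ∈ eB m X := Finset.mem_filter.2 ⟨hx, h⟩
        rw [hZeq] at hxB
        obtain ⟨z, hz, rfl⟩ := Finset.mem_image.1 hxB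
        have := Finset.mem_range.1 (Block.subset_of_mem_edges _ hZ hz)
        exact Finset.mem_range.2 (by omega)
    have hcA : (eA m X).card = r₁ := Block.card_of_mem_edges _ hA
    have hcB : (eB m X).card = r₂ := by
      rw [hZeq, Finset.card_image_of_injective _ (add_left_injective m)]
      exact Block.card_of_mem_edges _ hZ
    have := card_eA_add_eB m X
    exact ⟨hXsub, by omega, hcA⟩
  · -- coverage
    intro e he
    obtain ⟨hesub, hecard, heA⟩ := he
    have heAm : eA m e ∈ {X | X ⊆ Finset.range m ∧ X.card = r₁} := by
      refine ⟨?_, heA⟩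
      intro x hx
      exact Finset.mem_range.2 (Finset.mem_filter.1 hx).2
    obtain ⟨i, hi⟩ := Set.mem_iUnion.1 (hc₁cov ▸ heAm : eA m e ∈ ⋃ i, (c₁ i).edges)
    have heBm : ∀ x ∈ eB m e, m ≤ x ∧ x < 2*m := by
      intro x hx
      obtain ⟨hxe, hxm⟩ := Finset.mem_filter.1 hx
      exact ⟨hxm, Finset.mem_range.1 (hesub hxe)⟩
    set Z := (eB m e).image (· - m) with hZdef
    have hZcard : Z.card = r₂ := by
      rw [hZdef, Finset.card_image_of_injOn]
      · have := card_eA_add_eB m e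
        omega
      · intro a ha b hb hab
        have hab' : a - m = b - m := hab
        have := (heBm a ha).1
        have := (heBm b hb).1
        omega
    have hZsub : Z ⊆ Finset.range m := by
      intro z hz
      obtain ⟨x, hx, rfl⟩ := Finset.mem_image.1 hz
      have := heBm x hx
      exact Finset.mem_range.2 (by omega)
    have hZmem : Z ∈ {X | X ⊆ Finset.range m ∧ X.card = r₂} := ⟨hZsub, hZcard⟩
    obtain ⟨j, hj⟩ := Set.mem_iUnion.1 (hc₂cov ▸ hZmem : Z ∈ ⋃ j, (c₂ j).edges)
    have heBZ : eB m e = Z.image (· + m) := by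
      ext x
      simp only [hZdef, Finset.mem_image]
      constructor
      · intro hx
        exact ⟨x - m, ⟨x, hx, rfl⟩, by have := (heBm x hx).1; omega⟩
      · rintro ⟨z, ⟨w, hw, rfl⟩, rfl⟩
        have := (heBm w hw).1
        have hww : w - m + m = w := by omega
        rw [hww]
        exact hw
    refine ⟨(i, j), Finset.mem_univ _, ?_⟩
    rw [Block.ofList_edges, transv_prodList_iff]
    exact ⟨hi, Z, hj, heBZ⟩

lemma sum_reflect_choose (m d : ℕ) :
    ∑ a ∈ (Finset.range (2*d+1)).erase d, m.choose a * m.choose (2*d - a)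
      = 2 * ∑ i ∈ Finset.range d, m.choose i * m.choose (2*d - i) := by
  classical
  have hsplit : (Finset.range (2*d+1)).erase d
      = Finset.range d ∪ Finset.Ico (d+1) (2*d+1) := by
    ext a
    simp only [Finset.mem_erase, Finset.mem_range, Finset.mem_union, Finset.mem_Ico]
    omega
  have hdisj : Disjoint (Finset.range d) (Finset.Ico (d+1) (2*d+1)) := by
    apply Finset.disjoint_left.2
    intro a ha ha'
    have := Finset.mem_range.1 ha
    have := (Finset.mem_Ico.1 ha').1
    omega
  rw [hsplit, Finset.sum_union hdisj]
  have himg : (Finset.range d).image (fun i => 2*d - i) = Finset.Ico (d+1) (2*d+1) := by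
    ext a
    simp only [Finset.mem_image, Finset.mem_range, Finset.mem_Ico]
    constructor
    · rintro ⟨i, hi, rfl⟩
      omega
    · intro ha
      exact ⟨2*d - a, by omega, by omega⟩
  have hinj : ∀ i ∈ Finset.range d, ∀ j ∈ Finset.range d,
      (fun i => 2*d - i) i = (fun i => 2*d - i) j → i = j := by
    intro i hi j hj h
    have hi' := Finset.mem_range.1 hi
    have hj' := Finset.mem_range.1 hj
    have h' : 2*d - i = 2*d - j := h
    omega
  have hsecond : ∑ a ∈ Finset.Ico (d+1) (2*d+1), m.choose a * m.choose (2*d - a)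
      = ∑ i ∈ Finset.range d, m.choose i * m.choose (2*d - i) := by
    rw [← himg, Finset.sum_image hinj]
    apply Finset.sum_congr rfl
    intro i hi
    have hi' := Finset.mem_range.1 hi
    have h1 : 2*d - (2*d - i) = i := by omega
    rw [h1, Nat.mul_comm]
  rw [hsecond]
  ring

lemma exactCover_gadget (m d : ℕ) :
    ∃ k, k ≤ 2 * (∑ i ∈ Finset.range d, m.choose i * m.choose (2*d - i)) ∧
    ExactCover (Finset.range (2*m)) (4*d+1) k
      {X | X ⊆ Finset.range (2*m) ∧ X.card = 4*d+1 ∧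
        (eA m X).card ≠ 2*d ∧ (eA m X).card ≠ 2*d+1} := by
  classical
  set Dg := (((Finset.range (2*m)).powersetCard (4*d+1)).filter
      (fun e => ¬((eA m e).card = 2*d) ∧ ¬((eA m e).card = 2*d+1))).image
      (fun e => (evens (eA m e), evens (eB m e))) with hDgdef
  have hDgprop : ∀ p ∈ Dg, p.1 ⊆ Aset m ∧ p.2 ⊆ Bset m ∧ p.1.card + p.2.card = 2*d ∧
      p.1.card ≠ d ∧ ∃ e₀, e₀ ⊆ Finset.range (2*m) ∧ e₀.card = 4*d+1 ∧
        evens (eA m e₀) = p.1 ∧ evens (eB m e₀) = p.2 := by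
    intro p hp
    obtain ⟨e, he, rfl⟩ := Finset.mem_image.1 hp
    obtain ⟨hepc, hne1, hne2⟩ := Finset.mem_filter.1 he
    obtain ⟨hesub, hecard⟩ := Finset.mem_powersetCard.1 hepc
    have hab := card_eA_add_eB m e
    have hcA := card_evens (eA m e)
    have hcB := card_evens (eB m e)
    refine ⟨(evens_subset _).trans (eA_subset m e hesub),
      (evens_subset _).trans (eB_subset m e hesub), by simp only; omega, by simp only; omega,
      e, hesub, hecard, rfl, rfl⟩
  have hlen : ∀ p, p ∈ Dg → (gadList m p.1 p.2).length = 4*d+1 := by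
    intro p hp
    rw [gadList_length]
    have := (hDgprop p hp).2.2.1
    omega
  have hne : ∀ p, ∀ hp : p ∈ Dg, ∀ P ∈ gadList m p.1 p.2, P.Nonempty := by
    intro p hp P hP
    obtain ⟨h1, h2, h3, h4, e₀, hesub, hecard, hev1, hev2⟩ := hDgprop p hp
    have htr : Transv (gadList m p.1 p.2) e₀ :=
      (gadget_iff m h1 h2 e₀).2 ⟨hesub, hev1, hev2, by omega⟩
    have hc := htr.1 P hP
    have hne0 : (e₀ ∩ P).Nonempty := Finset.card_pos.1 (by omega)
    exact hne0.mono Finset.inter_subset_right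
  refine ⟨Dg.card, ?_, ?_⟩
  · have hsub : Dg ⊆ ((Finset.range (2*d+1)).erase d).biUnion
        (fun a => (Aset m).powersetCard a ×ˢ (Bset m).powersetCard (2*d - a)) := by
      intro p hp
      obtain ⟨h1, h2, h3, h4, _⟩ := hDgprop p hp
      apply Finset.mem_biUnion.2
      refine ⟨p.1.card, Finset.mem_erase.2 ⟨h4, Finset.mem_range.2 (by omega)⟩, ?_⟩
      exact Finset.mem_product.2 ⟨Finset.mem_powersetCard.2 ⟨h1, rfl⟩,
        Finset.mem_powersetCard.2 ⟨h2, by omega⟩⟩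
    have hBcard : (Bset m).card = m := by
      rw [Bset, Nat.card_Ico]
      omega
    have hterm : ∀ a, ((Aset m).powersetCard a ×ˢ (Bset m).powersetCard (2*d - a)).card
        = m.choose a * m.choose (2*d - a) := by
      intro a
      rw [Finset.card_product, Finset.card_powersetCard, Finset.card_powersetCard,
        hBcard]
      rw [Aset, Finset.card_range]
    calc Dg.card ≤ _ := Finset.card_le_card hsub
      _ ≤ ∑ a ∈ (Finset.range (2*d+1)).erase d,
            ((Aset m).powersetCard a ×ˢ (Bset m).powersetCard (2*d - a)).card :=
        Finset.card_biUnion_le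
      _ = ∑ a ∈ (Finset.range (2*d+1)).erase d, m.choose a * m.choose (2*d - a) :=
        Finset.sum_congr rfl (fun a _ => hterm a)
      _ = 2 * ∑ i ∈ Finset.range d, m.choose i * m.choose (2*d - i) :=
        sum_reflect_choose m d
  · refine exactCover_of_finset _ _ _ Dg
      (fun p hp => Block.ofList _ _ (gadList m p.1 p.2) (hlen p hp) (hne p hp)
        (gadList_subset m (hDgprop p hp).1 (hDgprop p hp).2.1)
        (gadList_pairwise m (hDgprop p hp).1 (hDgprop p hp).2.1)) ?_ ?_ ?_
    · intro p hp p' hp' hpp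
      apply Set.disjoint_left.2
      intro X hX hX'
      rw [Block.ofList_edges] at hX hX'
      rw [gadget_iff m (hDgprop p hp).1 (hDgprop p hp).2.1] at hX
      rw [gadget_iff m (hDgprop p' hp').1 (hDgprop p' hp').2.1] at hX'
      exact hpp (Prod.ext (hX.2.1.symm.trans hX'.2.1) (hX.2.2.1.symm.trans hX'.2.2.1))
    · intro p hp X hX
      rw [Block.ofList_edges] at hX
      rw [gadget_iff m (hDgprop p hp).1 (hDgprop p hp).2.1] at hX
      obtain ⟨hXsub, hev1, hev2, hXcard⟩ := hX
      obtain ⟨h1, h2, h3, h4, _⟩ := hDgprop p hp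
      have hcA := card_evens (eA m X)
      have hcB := card_evens (eB m X)
      rw [hev1] at hcA
      rw [hev2] at hcB
      have hab := card_eA_add_eB m X
      refine ⟨hXsub, by omega, by omega, by omega⟩
    · intro e he
      obtain ⟨hesub, hecard, hne1, hne2⟩ := he
      have hemem : e ∈ ((Finset.range (2*m)).powersetCard (4*d+1)).filter
          (fun e => ¬((eA m e).card = 2*d) ∧ ¬((eA m e).card = 2*d+1)) :=
        Finset.mem_filter.2 ⟨Finset.mem_powersetCard.2 ⟨hesub, hecard⟩, hne1, hne2⟩
      have hpmem : (evens (eA m e), evens (eB m e)) ∈ Dg :=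
        Finset.mem_image.2 ⟨e, hemem, rfl⟩
      refine ⟨(evens (eA m e), evens (eB m e)), hpmem, ?_⟩
      rw [Block.ofList_edges]
      rw [gadget_iff m (hDgprop _ hpmem).1 (hDgprop _ hpmem).2.1]
      have hcA := card_evens (eA m e)
      have hcB := card_evens (eB m e)
      have hab := card_eA_add_eB m e
      exact ⟨hesub, rfl, rfl, by simp only; omega⟩

lemma main_bound (d m : ℕ) :
    f (4*d+1) (2*m) ≤ 2 * (∑ i ∈ Finset.range d, m.choose i * m.choose (2*d - i))
      + 2 * (f (2*d) m * f (2*d+1) m) := by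
  obtain ⟨k, hk, hcg⟩ := exactCover_gadget m d
  have hp1 := exactCover_prod m (2*d) (2*d+1)
  have hp2 := exactCover_prod m (2*d+1) (2*d)
  rw [show 2*d + (2*d+1) = 4*d+1 by ring] at hp1
  rw [show 2*d+1 + (2*d) = 4*d+1 by ring] at hp2
  have hd12 : Disjoint
      {X | X ⊆ Finset.range (2*m) ∧ X.card = 4*d+1 ∧ (eA m X).card = 2*d}
      {X | X ⊆ Finset.range (2*m) ∧ X.card = 4*d+1 ∧ (eA m X).card = 2*d+1} := by
    rw [Set.disjoint_left]
    rintro X ⟨_, _, h1⟩ ⟨_, _, h2⟩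
    omega
  have hu12 := exactCover_union hp1 hp2 hd12
  have hdg : Disjoint
      {X | X ⊆ Finset.range (2*m) ∧ X.card = 4*d+1 ∧
        (eA m X).card ≠ 2*d ∧ (eA m X).card ≠ 2*d+1}
      ({X | X ⊆ Finset.range (2*m) ∧ X.card = 4*d+1 ∧ (eA m X).card = 2*d} ∪
       {X | X ⊆ Finset.range (2*m) ∧ X.card = 4*d+1 ∧ (eA m X).card = 2*d+1}) := by
    rw [Set.disjoint_left]
    rintro X ⟨_, _, h1, h2⟩ (⟨_, _, h3⟩ | ⟨_, _, h3⟩) <;> omega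
  have htot := exactCover_union hcg hu12 hdg
  have hFeq : ({X | X ⊆ Finset.range (2*m) ∧ X.card = 4*d+1 ∧
        (eA m X).card ≠ 2*d ∧ (eA m X).card ≠ 2*d+1} ∪
      ({X | X ⊆ Finset.range (2*m) ∧ X.card = 4*d+1 ∧ (eA m X).card = 2*d} ∪
       {X | X ⊆ Finset.range (2*m) ∧ X.card = 4*d+1 ∧ (eA m X).card = 2*d+1}))
      = {X | X ⊆ Finset.range (2*m) ∧ X.card = 4*d+1} := by
    ext X
    simp only [Set.mem_union, Set.mem_setOf_eq]
    constructor
    · rintro (⟨h1, h2, _⟩ | ⟨h1, h2, _⟩ | ⟨h1, h2, _⟩) <;> exact ⟨h1, h2⟩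
    · rintro ⟨h1, h2⟩
      by_cases hc1 : (eA m X).card = 2*d
      · exact Or.inr (Or.inl ⟨h1, h2, hc1⟩)
      · by_cases hc2 : (eA m X).card = 2*d+1
        · exact Or.inr (Or.inr ⟨h1, h2, hc2⟩)
        · exact Or.inl ⟨h1, h2, hc1, hc2⟩
  rw [hFeq] at htot
  have hle := f_le_of_exactCover htot
  have hcomm : f (2*d+1) m * f (2*d) m = f (2*d) m * f (2*d+1) m := Nat.mul_comm _ _
  omega

theorem f_odd_paired_recurrence (d : ℕ) (hd : 1 ≤ d) (r : ℕ) (hr : r = 4 * d + 1)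
    (ε : ℝ) (hε : 0 < ε) :
    ∃ N : ℕ, ∀ n : ℕ, Even n → N ≤ n →
      (f r n : ℝ) ≤ 2 * (1 + ε) *
          (∑ i ∈ Finset.range d, ((n / 2).choose i : ℝ) * ((n / 2).choose ((r - 1) / 2 - i) : ℝ))
        + 2 * (f (2 * d) (n / 2) : ℝ) * (f (2 * d + 1) (n / 2) : ℝ) := by
  refine ⟨0, ?_⟩
  intro n hn _
  obtain ⟨t, ht⟩ := hn
  have hm : n / 2 = t := by omega
  have hn2 : n = 2 * t := by omega
  subst hr
  have hhalf : (4*d+1 - 1)/2 = 2*d := by omega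
  rw [hm, hhalf, hn2]
  have hnat := main_bound d t
  have hcast : (f (4*d+1) (2*t) : ℝ) ≤
      2 * (∑ i ∈ Finset.range d, (t.choose i : ℝ) * (t.choose (2*d - i) : ℝ))
        + 2 * ((f (2*d) t : ℝ) * (f (2*d+1) t : ℝ)) := by
    have h := (Nat.cast_le (α := ℝ)).2 hnat
    push_cast at h
    convert h using 2
  have hsum_nonneg : (0:ℝ) ≤ ∑ i ∈ Finset.range d, (t.choose i : ℝ) * (t.choose (2*d - i) : ℝ) := by
    apply Finset.sum_nonneg
    intro i _
    positivity
  nlinarith [hcast, hsum_nonneg, hε]
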